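/- arXiv:2102.11900 — 13 statements merged into one kernel-verified Lean document; each statement's English description precedes it below -/
import Mathlib

section
/- Let Ω be a finite set, let G ≤ Sym(Ω) be a permutation group of fixity f ≥ 2, let p be a prime with p > f, and let α ∈ Ω. If p divides the order of the point stabilizer G_α, then G_α contains a Sylow p-subgroup of G. -/
variable {Ω : Type*} [Fintype Ω]

/-- The number of fixed points of a permutation. -/
noncomputable def fixedCount (g : Equiv.Perm Ω) : ℕ := Nat.card {x : Ω // g x = x}

/-- `G` has fixity `f`: every non-trivial element fixes at most `f` points,
and some non-trivial element fixes exactly `f` points. -/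
def HasFixity (G : Subgroup (Equiv.Perm Ω)) (f : ℕ) : Prop :=
  (∀ g ∈ G, g ≠ 1 → fixedCount g ≤ f) ∧ ∃ g ∈ G, g ≠ 1 ∧ fixedCount g = f

/-- `G` is transitive on `Ω`. -/
def IsTransitive (G : Subgroup (Equiv.Perm Ω)) : Prop :=
  ∀ α β : Ω, ∃ g ∈ G, g α = β

/-- `G` is elusive: transitive, and it has no fixed-point-free element of prime order. -/
def IsElusive (G : Subgroup (Equiv.Perm Ω)) : Prop :=
  IsTransitive G ∧ ¬ ∃ g ∈ G, (orderOf g).Prime ∧ ∀ x : Ω, g x ≠ x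

/-- if `G` has fixity `f ≥ 2`, `p > f` is a prime dividing `|G_α|`,
then `G_α` contains a Sylow `p`-subgroup of `G`. -/
theorem stmt_0 (G : Subgroup (Equiv.Perm Ω)) (f : ℕ) (hf : 2 ≤ f)
    (hfix : HasFixity G f) (p : ℕ) (hp : p.Prime) (hpf : f < p) (α : Ω)
    (hdvd : p ∣ Nat.card ↥(G ⊓ MulAction.stabilizer (Equiv.Perm Ω) α)) :
    ∃ P : Sylow p ↥G, Subgroup.map G.subtype (P : Subgroup ↥G) ≤
      G ⊓ MulAction.stabilizer (Equiv.Perm Ω) α := by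
  classical
  haveI : Fact p.Prime := ⟨hp⟩
  set st := MulAction.stabilizer (Equiv.Perm Ω) α with hst
  set K : Subgroup ↥G := Subgroup.comap G.subtype st with hKdef
  have hmapK : Subgroup.map G.subtype K = G ⊓ st := by
    rw [hKdef, Subgroup.map_comap_eq, Subgroup.range_subtype]
  -- transfer the divisibility hypothesis to K
  have hcardK : Nat.card ↥K = Nat.card ↥(G ⊓ st) := by
    rw [← hmapK]
    exact Nat.card_congr (Subgroup.equivMapOfInjective K G.subtype
      G.subtype_injective).toEquiv
  have hdvdK : p ∣ Nat.card ↥K := by rw [hcardK]; exact hdvd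
  haveI : Finite ↥K := inferInstance
  letI : Fintype ↥K := Fintype.ofFinite _
  -- Cauchy: an element of order p in K
  obtain ⟨q₀, hq₀⟩ := exists_prime_orderOf_dvd_card (G := ↥K) p
    (by rwa [← Nat.card_eq_fintype_card])
  -- a Sylow p-subgroup Q of K containing q₀
  obtain ⟨Q, hQle⟩ := (IsPGroup.of_card (n := 1)
    ((Nat.card_zpowers q₀).trans (hq₀.trans (pow_one p).symm))).exists_le_sylow
  have hq₀Q : q₀ ∈ (Q : Subgroup ↥K) := hQle (Subgroup.mem_zpowers q₀)
  -- push Q into G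
  set Q' : Subgroup ↥G := Subgroup.map K.subtype (Q : Subgroup ↥K) with hQ'def
  have hQ'K : Q' ≤ K := Subgroup.map_subtype_le _
  have hQ'p : IsPGroup p Q' := Q.isPGroup'.map _
  obtain ⟨P, hQP⟩ := hQ'p.exists_le_sylow
  -- the distinguished nontrivial element of Q'
  set q₁ : ↥G := K.subtype q₀ with hq₁def
  have hq₁Q' : q₁ ∈ Q' := ⟨q₀, hq₀Q, rfl⟩
  have hordq₁ : orderOf ((q₁ : Equiv.Perm Ω)) = p := by
    rw [hq₁def]
    rw [show ((K.subtype q₀ : ↥G) : Equiv.Perm Ω) = G.subtype (K.subtype q₀) from rfl]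
    rw [orderOf_injective G.subtype G.subtype_injective,
      orderOf_injective K.subtype K.subtype_injective, hq₀]
  have hq₁ne : ((q₁ : ↥G) : Equiv.Perm Ω) ≠ 1 := by
    intro h
    rw [h, orderOf_one] at hordq₁
    exact hp.one_lt.ne' hordq₁.symm
  -- the common fixed-point set of Q'
  set S : Set Ω := {x : Ω | ∀ q : ↥G, q ∈ Q' → (q : Equiv.Perm Ω) x = x} with hSdef
  have hαS : α ∈ S := by
    intro q hq
    have hqK : q ∈ K := hQ'K hq
    rw [hKdef, Subgroup.mem_comap] at hqK
    exact hqK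
  have hSsub : S ⊆ {x : Ω | ((q₁ : ↥G) : Equiv.Perm Ω) x = x} :=
    fun x hx => hx q₁ hq₁Q'
  have hScard : Nat.card S ≤ f := by
    have h1 : Nat.card S ≤ Nat.card {x : Ω | ((q₁ : ↥G) : Equiv.Perm Ω) x = x} :=
      Nat.card_mono (Set.toFinite _) hSsub
    have h2 : Nat.card {x : Ω | ((q₁ : ↥G) : Equiv.Perm Ω) x = x} =
        fixedCount ((q₁ : ↥G) : Equiv.Perm Ω) := rfl
    exact le_trans h1 (h2 ▸ hfix.1 _ q₁.2 hq₁ne)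
  -- S is invariant under elements normalizing Q'
  have hSinv : ∀ h : ↥G, h ∈ Subgroup.normalizer (Q' : Set ↥G) → ∀ x ∈ S, (h : Equiv.Perm Ω) x ∈ S := by
    intro h hh x hx q hq
    have hn : h⁻¹ * q * h ∈ Q' := by
      have := (Subgroup.mem_normalizer_iff.mp hh (h⁻¹ * q * h)).mpr
      apply this
      have : h * (h⁻¹ * q * h) * h⁻¹ = q := by group
      rw [this]; exact hq
    have hfixn := hx _ hn
    have hqeq : q = h * (h⁻¹ * q * h) * h⁻¹ := by group
    calc (q : Equiv.Perm Ω) ((h : Equiv.Perm Ω) x)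
        = ((h : Equiv.Perm Ω)) (((h⁻¹ * q * h : ↥G) : Equiv.Perm Ω)
            (((h⁻¹ : ↥G) : Equiv.Perm Ω) ((h : Equiv.Perm Ω) x))) := by
          conv_lhs => rw [hqeq]
          simp [Equiv.Perm.mul_apply]
      _ = (h : Equiv.Perm Ω) x := by
          have : ((h⁻¹ : ↥G) : Equiv.Perm Ω) ((h : Equiv.Perm Ω) x) = x := by
            simp
          rw [this, hfixn]
  -- key step: a p-element normalizing Q' fixes α
  have key : ∀ g : ↥G, g ∈ Subgroup.normalizer (Q' : Set ↥G) → g ∈ P → (g : Equiv.Perm Ω) α = α := by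
    intro g hgnorm hgP
    set c : Equiv.Perm Ω := (g : Equiv.Perm Ω) with hcdef
    obtain ⟨m, hm⟩ := P.isPGroup' ⟨g, hgP⟩
    have hgpow : g ^ (p ^ m) = 1 := by
      have := congrArg (Subtype.val) hm
      simpa using this
    have hcpow : c ^ (p ^ m) = 1 := by
      rw [hcdef]
      have : ((g ^ (p ^ m) : ↥G) : Equiv.Perm Ω) = (g : Equiv.Perm Ω) ^ (p ^ m) := by
        push_cast; rfl
      rw [← this, hgpow]; rfl
    have hper : Function.IsPeriodicPt c (p ^ m) α := by
      have : (⇑c)^[p ^ m] α = α := by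
        rw [← Equiv.Perm.coe_pow, hcpow]; rfl
      exact this
    set k := Function.minimalPeriod (⇑c) α with hkdef
    have hk : k ∣ p ^ m := hper.minimalPeriod_dvd
    have hiter : ∀ i : ℕ, (⇑c)^[i] α ∈ S := by
      intro i
      induction i with
      | zero => simpa using hαS
      | succ n ih =>
        rw [Function.iterate_succ_apply']
        exact hSinv g hgnorm _ ih
    -- k ≤ card S
    have hkle : k ≤ Nat.card S := by
      have hinj : Set.InjOn (fun i => (⇑c)^[i] α) (Finset.range k : Finset ℕ) := by
        intro a ha b hb hab
        exact Function.iterate_injOn_Iio_minimalPeriod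
          (by simpa using Finset.mem_range.mp ha)
          (by simpa using Finset.mem_range.mp hb) hab
      have hcardim : ((Finset.range k).image fun i => (⇑c)^[i] α).card = k := by
        rw [Finset.card_image_of_injOn hinj, Finset.card_range]
      have hsubS : ((Finset.range k).image fun i => (⇑c)^[i] α) ⊆ S.toFinset := by
        intro y hy
        obtain ⟨i, _, rfl⟩ := Finset.mem_image.mp hy
        exact Set.mem_toFinset.mpr (hiter i)
      calc k = ((Finset.range k).image fun i => (⇑c)^[i] α).card := hcardim.symm
        _ ≤ S.toFinset.card := Finset.card_le_card hsubS
        _ = Nat.card S := by rw [Set.toFinset_card, Nat.card_eq_fintype_card]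
    obtain ⟨j, hj, hkj⟩ := (Nat.dvd_prime_pow hp).mp hk
    have hj0 : j = 0 := by
      by_contra hj0
      have hle : p ≤ p ^ j := Nat.le_self_pow hj0 p
      have h2 : k ≤ f := hkle.trans hScard
      rw [hkj] at h2
      omega
    have hk1 : k = 1 := by rw [hkj, hj0, pow_zero]
    have : Function.IsFixedPt (⇑c) α :=
      Function.minimalPeriod_eq_one_iff_isFixedPt.mp hk1
    exact this
  -- Q' must equal P
  have hQ'eq : Q' = (P : Subgroup ↥G) := by
    by_contra hne
    have hlt : Q' < (P : Subgroup ↥G) := lt_of_le_of_ne hQP hne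
    haveI : Finite ↥(P : Subgroup ↥G) := inferInstance
    haveI hnil : Group.IsNilpotent ↥(P : Subgroup ↥G) := P.isPGroup'.isNilpotent
    have hnc : NormalizerCondition ↥(P : Subgroup ↥G) :=
      normalizerCondition_of_isNilpotent
    have h1 : Q'.subgroupOf (P : Subgroup ↥G) < ⊤ := by
      rw [lt_top_iff_ne_top]
      intro hcon
      exact hlt.not_ge (Subgroup.subgroupOf_eq_top.mp hcon)
    obtain ⟨x, hxnorm, hxQ⟩ := SetLike.exists_of_lt (hnc _ h1)
    set g : ↥G := (x : ↥G) with hgdef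
    have hgP : g ∈ P := x.2
    have hgnotQ' : g ∉ Q' := fun h => hxQ (Subgroup.mem_subgroupOf.mpr h)
    have hgnorm : g ∈ Subgroup.normalizer (Q' : Set ↥G) := by
      rw [Subgroup.mem_normalizer_iff]
      have hconj : ∀ n : ↥G, n ∈ (Q' : Set ↥G) → g * n * g⁻¹ ∈ (Q' : Set ↥G) := by
        intro n hn
        have hnP : n ∈ (P : Subgroup ↥G) := hQP hn
        have hnQ : (⟨n, hnP⟩ : ↥(P : Subgroup ↥G)) ∈ Q'.subgroupOf (P : Subgroup ↥G) :=
          Subgroup.mem_subgroupOf.mpr hn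
        have := (Subgroup.mem_normalizer_iff.mp hxnorm ⟨n, hnP⟩).mp hnQ
        have h2 := Subgroup.mem_subgroupOf.mp this
        simpa using h2
      exact fun n => (Subgroup.mem_normalizer_fintype hconj) n
    have hgα := key g hgnorm hgP
    have hgK : g ∈ K := by
      rw [hKdef, Subgroup.mem_comap]
      exact hgα
    -- build a p-subgroup of K strictly bigger than Q
    set R : Subgroup ↥G := Q' ⊔ Subgroup.zpowers g with hRdef
    have hRP : R ≤ (P : Subgroup ↥G) := by
      rw [hRdef]
      exact sup_le hQP ((Subgroup.zpowers_le).mpr hgP)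
    have hRp : IsPGroup p R := P.isPGroup'.to_le hRP
    have hRK : R ≤ K := by
      rw [hRdef]
      exact sup_le hQ'K ((Subgroup.zpowers_le).mpr hgK)
    have hQR : (Q : Subgroup ↥K) ≤ R.comap K.subtype := by
      rw [← Subgroup.map_le_iff_le_comap]
      exact le_sup_left
    have hcomap_p : IsPGroup p (R.comap K.subtype) := hRp.comap_subtype
    have heq := Q.3 hcomap_p hQR
    have hgR : g ∈ R := by
      rw [hRdef]
      exact Subgroup.mem_sup_right (Subgroup.mem_zpowers g)
    have hgQ : (⟨g, hgK⟩ : ↥K) ∈ (Q : Subgroup ↥K) := by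
      rw [← heq, Subgroup.mem_comap]
      exact hgR
    exact hgnotQ' ⟨⟨g, hgK⟩, hgQ, rfl⟩
  -- conclude
  refine ⟨P, ?_⟩
  rw [← hmapK]
  exact Subgroup.map_mono (hQ'eq ▸ hQ'K)
end

section
/- Let Ω be a finite set, let G ≤ Sym(Ω) be a transitive permutation group of fixity f ≥ 2, and let p be a prime with p > f. If G contains a non-trivial normal p-subgroup, then for every α ∈ Ω the prime p does not divide the order of the point stabilizer G_α. -/
variable {Ω : Type*} [Fintype Ω]

/-- a transitive group of fixity `f ≥ 2` with a non-trivial normal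
`p`-subgroup for a prime `p > f` has point stabilizers of order coprime to `p`. -/
theorem stmt_1 (G : Subgroup (Equiv.Perm Ω)) (htr : IsTransitive G) (f : ℕ) (hf : 2 ≤ f)
    (hfix : HasFixity G f) (p : ℕ) (hp : p.Prime) (hpf : f < p)
    (N : Subgroup ↥G) (hNnormal : N.Normal) (hNbot : N ≠ ⊥) (hNp : IsPGroup p ↥N) :
    ∀ α : Ω, ¬ p ∣ Nat.card ↥(G ⊓ MulAction.stabilizer (Equiv.Perm Ω) α) := by
  classical
  have hpFact : Fact p.Prime := ⟨hp⟩
  intro α hdvd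
  -- a nontrivial element of N
  obtain ⟨n, hnN, hn1⟩ : ∃ n ∈ N, n ≠ 1 := by
    rcases N.bot_or_exists_ne_one with h | h
    · exact absurd h hNbot
    · obtain ⟨n, hn, hn1⟩ := h; exact ⟨n, hn, hn1⟩
  set N' : Subgroup (Equiv.Perm Ω) := N.map G.subtype with hN'def
  have hN'p : IsPGroup p ↥N' := hNp.map G.subtype
  -- fixed points of N' are empty
  have hfixN : MulAction.fixedPoints N' Ω = ∅ := by
    rw [Set.eq_empty_iff_forall_notMem]
    intro ω hω
    apply hn1
    have key : ∀ β : Ω, (n : Equiv.Perm Ω) β = β := by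
      intro β
      obtain ⟨g, hgG, hgβ⟩ := htr ω β
      set gG : ↥G := ⟨g, hgG⟩ with hgGdef
      have hmem : gG⁻¹ * n * gG ∈ N := by
        have := hNnormal.conj_mem n hnN gG⁻¹
        rwa [inv_inv] at this
      have hmem' : ((gG⁻¹ * n * gG : ↥G) : Equiv.Perm Ω) ∈ N' :=
        ⟨gG⁻¹ * n * gG, hmem, rfl⟩
      have hfix' : ((gG⁻¹ * n * gG : ↥G) : Equiv.Perm Ω) ω = ω := hω ⟨_, hmem'⟩
      have : (g⁻¹ * (n : Equiv.Perm Ω) * g) ω = ω := hfix'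
      have h2 : (n : Equiv.Perm Ω) (g ω) = g ω := by
        have := congrArg g this
        simpa [Equiv.Perm.mul_apply] using this
      rwa [hgβ] at h2
    ext : 1
    exact Equiv.ext key
  have hpΩ : p ∣ Nat.card Ω := by
    have h := hN'p.card_modEq_card_fixedPoints Ω
    have h0 : Nat.card (MulAction.fixedPoints N' Ω) = 0 := by
      rw [hfixN]; simp
    rw [h0] at h
    exact (Nat.modEq_zero_iff_dvd).mp h
  -- Cauchy: element of order p in the stabilizer
  haveI : Finite ↥(G ⊓ MulAction.stabilizer (Equiv.Perm Ω) α) := inferInstance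
  haveI : Fintype ↥(G ⊓ MulAction.stabilizer (Equiv.Perm Ω) α) := Fintype.ofFinite _
  rw [Nat.card_eq_fintype_card] at hdvd
  obtain ⟨x, hx⟩ := exists_prime_orderOf_dvd_card p hdvd
  set σ : Equiv.Perm Ω := (x : Equiv.Perm Ω) with hσdef
  have hσord : orderOf σ = p := by
    rw [← hx]
    exact orderOf_injective (G ⊓ MulAction.stabilizer (Equiv.Perm Ω) α).subtype
      Subtype.coe_injective x
  have hσG : σ ∈ G := x.2.1
  have hσα : σ α = α := x.2.2
  have hσ1 : σ ≠ 1 := by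
    intro h
    rw [h, orderOf_one] at hσord
    exact hp.ne_one hσord.symm
  -- zpowers σ is a p-group
  have hzp : IsPGroup p ↥(Subgroup.zpowers σ) := by
    apply IsPGroup.of_card (n := 1)
    rw [Nat.card_zpowers, hσord, pow_one]
  have hcong := hzp.card_modEq_card_fixedPoints Ω
  have hsets : MulAction.fixedPoints (Subgroup.zpowers σ) Ω = {x : Ω | σ x = x} := by
    ext ω
    constructor
    · intro h
      exact h ⟨σ, Subgroup.mem_zpowers σ⟩
    · intro h g
      have hω' : σ ω = ω := h
      obtain ⟨k, hk⟩ := g.2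
      have hnat : ∀ m : ℕ, (σ ^ m) ω = ω := by
        intro m
        induction m with
        | zero => simp
        | succ m ih => rw [pow_succ, Equiv.Perm.mul_apply, hω', ih]
      have hz : ∀ k : ℤ, (σ ^ k) ω = ω := by
        intro k
        rcases k with k | k
        · exact_mod_cast hnat k
        · have h1 := hnat (k + 1)
          rw [zpow_negSucc, Equiv.Perm.inv_eq_iff_eq]
          exact h1.symm
      show (g : Equiv.Perm Ω) ω = ω
      rw [← hk]
      exact hz k
  have hcfix : Nat.card (MulAction.fixedPoints (Subgroup.zpowers σ) Ω) = fixedCount σ := by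
    rw [hsets]; rfl
  rw [hcfix] at hcong
  have hpfix : p ∣ fixedCount σ := (Nat.modEq_zero_iff_dvd).mp
    ((hcong.symm.trans (hpΩ.modEq_zero_nat)))
  have hfixpos : 0 < fixedCount σ := by
    have : Nonempty {x : Ω // σ x = x} := ⟨⟨α, hσα⟩⟩
    exact Nat.card_pos
  have hle : p ≤ fixedCount σ := Nat.le_of_dvd hfixpos hpfix
  have hle2 : fixedCount σ ≤ f := hfix.1 σ hσG hσ1
  omega
end

section
/- Let Ω be a finite set, let G ≤ Sym(Ω) be a permutation group of fixity f ≥ 2, let p be a prime with p > f, let α ∈ Ω, and let P be a Sylow p-subgroup of G such that the stabilizer P_α = P ∩ G_α is non-trivial. Then the center Z(P) is contained in G_α. -/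
variable {Ω : Type*} [Fintype Ω]

/-- if `G` has fixity `f ≥ 2`, `p > f` is prime, and `P` is a Sylow
`p`-subgroup of `G` whose stabilizer of `α` is non-trivial, then `Z(P) ≤ G_α`. -/
theorem stmt_2 (G : Subgroup (Equiv.Perm Ω)) (f : ℕ) (hf : 2 ≤ f)
    (hfix : HasFixity G f) (p : ℕ) (hp : p.Prime) (hpf : f < p) (α : Ω)
    (P : Sylow p ↥G)
    (hPα : Subgroup.map G.subtype (P : Subgroup ↥G) ⊓
      MulAction.stabilizer (Equiv.Perm Ω) α ≠ ⊥) :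
    Subgroup.map (Subgroup.map G.subtype (P : Subgroup ↥G)).subtype
      (Subgroup.center ↥(Subgroup.map G.subtype (P : Subgroup ↥G))) ≤
      MulAction.stabilizer (Equiv.Perm Ω) α := by
  set Q := Subgroup.map G.subtype (P : Subgroup ↥G) with hQdef
  -- obtain a nontrivial stabilizing element x ∈ Q
  obtain ⟨⟨x, hx⟩, hxne⟩ := Subgroup.ne_bot_iff_exists_ne_one.mp hPα
  obtain ⟨hxQ, hxα⟩ := hx
  have hx1 : x ≠ 1 := by
    intro h; apply hxne; exact Subtype.ext h
  have hxG : x ∈ G := by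
    obtain ⟨g, -, rfl⟩ := hxQ; exact g.2
  have hxf : fixedCount x ≤ f := hfix.1 x hxG hx1
  -- now take z in the image of the center
  rintro z ⟨c, hc, rfl⟩
  have hcQ : (c : Equiv.Perm Ω) ∈ Q := c.2
  -- commutation of c with x
  have hcomm : (c : Equiv.Perm Ω) * x = x * (c : Equiv.Perm Ω) := by
    have := (Subgroup.mem_center_iff.mp hc) ⟨x, hxQ⟩
    exact congrArg Subtype.val this.symm
  -- c has p-power order
  obtain ⟨g, hgP, hgc⟩ := hcQ
  obtain ⟨k, hk⟩ := P.isPGroup' ⟨g, hgP⟩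
  have hck : (c : Equiv.Perm Ω) ^ (p ^ k) = 1 := by
    have : g ^ (p ^ k) = 1 := congrArg Subtype.val hk
    rw [← hgc, ← map_pow, this, map_one]
  set w : Equiv.Perm Ω := (c : Equiv.Perm Ω) with hw
  -- α is a periodic point of w
  have hper : Function.IsPeriodicPt w (p ^ k) α := by
    show w^[p ^ k] α = α
    rw [Equiv.Perm.iterate_eq_pow, hck]; rfl
  have hpk : 0 < p ^ k := pow_pos hp.pos k
  set d := Function.minimalPeriod w α with hd
  have hdvd : d ∣ p ^ k := hper.minimalPeriod_dvd
  have hdpos : 0 < d := hper.minimalPeriod_pos hpk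
  -- every iterate of w applied to α is fixed by x
  have hfixmem : ∀ i : ℕ, x (w^[i] α) = w^[i] α := by
    intro i
    induction i with
    | zero => exact hxα
    | succ n ih =>
      rw [Function.iterate_succ_apply']
      have : x (w ((w^[n]) α)) = w (x ((w^[n]) α)) := by
        rw [← Equiv.Perm.mul_apply, ← hcomm, Equiv.Perm.mul_apply]
      rw [this, ih]
  -- injection Fin d → fixed points of x
  have hdle : d ≤ f := by
    have hinj : Function.Injective (fun i : Fin d => (⟨w^[i.1] α, hfixmem i.1⟩ : {ω : Ω // x ω = ω})) := by
      intro i j hij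
      have := Function.iterate_injOn_Iio_minimalPeriod (f := w) (x := α) i.2 j.2
        (congrArg Subtype.val hij)
      exact Fin.ext this
    calc d = Nat.card (Fin d) := (Nat.card_eq_fintype_card.trans (Fintype.card_fin d)).symm
      _ ≤ Nat.card {ω : Ω // x ω = ω} := Nat.card_le_card_of_injective _ hinj
      _ ≤ f := hxf
  -- d divides p^k and d ≤ f < p, so d = 1
  obtain ⟨j, hj, hdj⟩ := (Nat.dvd_prime_pow hp).mp hdvd
  have hj0 : j = 0 := by
    by_contra hj0
    have : p ≤ p ^ j := Nat.le_self_pow hj0 p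
    omega
  have hd1 : Function.minimalPeriod (⇑w) α = 1 := by
    rw [← hd, hdj, hj0, pow_zero]
  exact Function.minimalPeriod_eq_one_iff_isFixedPt.mp hd1
end

section
/- Let Ω be a finite set and let G ≤ Sym(Ω) be an elusive permutation group of fixity f. If G contains a non-trivial normal p-subgroup for a prime p, then p ≤ f. -/
variable {Ω : Type*} [Fintype Ω]

/-- an elusive group of fixity `f` with a non-trivial normal
`p`-subgroup satisfies `p ≤ f`. -/
theorem stmt_3 (G : Subgroup (Equiv.Perm Ω)) (f : ℕ) (hel : IsElusive G)
    (hfix : HasFixity G f) (p : ℕ) (hp : p.Prime)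
    (N : Subgroup ↥G) (hNnormal : N.Normal) (hNbot : N ≠ ⊥) (hNp : IsPGroup p ↥N) :
    p ≤ f := by
  classical
  haveI : Fact p.Prime := ⟨hp⟩
  obtain ⟨htrans, helno⟩ := hel
  -- Step 1 : p ∣ card Ω
  have hpdvd : p ∣ Nat.card Ω := by
    by_contra hnd
    obtain ⟨α, hα⟩ := hNp.nonempty_fixed_point_of_prime_not_dvd_card Ω hnd
    apply hNbot
    rw [Subgroup.eq_bot_iff_forall]
    intro n hn
    have hfixall : ∀ β : Ω, ((n : ↥G) : Equiv.Perm Ω) β = β := by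
      intro β
      obtain ⟨h, hhG, hhα⟩ := htrans α β
      set h' : ↥G := ⟨h, hhG⟩ with hh'
      have hconj : (h'⁻¹ * n * h') ∈ N := by
        simpa using hNnormal.conj_mem n hn h'⁻¹
      have := hα ⟨h'⁻¹ * n * h', hconj⟩
      have heq : ((h'⁻¹ * n * h' : ↥G) : Equiv.Perm Ω) α = α := by
        exact hα ⟨h'⁻¹ * n * h', hconj⟩
      have : ((n : ↥G) : Equiv.Perm Ω) (h α) = h α := by
        have := congrArg (fun x => h x) heq
        simpa [hh', Equiv.Perm.mul_apply] using this
      rwa [hhα] at this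
    ext x
    · simp [hfixall x]
  -- Step 2 : an element of order p in N
  haveI : Finite ↥N := Subtype.finite
  haveI : Nontrivial ↥N := N.nontrivial_iff_ne_bot.mpr hNbot
  have hpcard : p ∣ Nat.card ↥N := hNp.card_eq_or_dvd.resolve_left (by
    simp [Nat.card_eq_one_iff_unique]
    intro h
    exact absurd (Subgroup.eq_bot_of_card_eq N (by simp [h])) hNbot)
  obtain ⟨n, hn⟩ := exists_prime_orderOf_dvd_card' p hpcard
  set g : Equiv.Perm Ω := ((n : ↥G) : Equiv.Perm Ω) with hg
  have horder : orderOf g = p := by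
    rw [← hn]
    exact (orderOf_injective ((Subgroup.subtype G).comp (Subgroup.subtype N))
      (G.subtype_injective.comp N.subtype_injective) n)
  have hgG : g ∈ G := ((n : ↥G)).2
  have hgne : g ≠ 1 := by
    intro h
    rw [h, orderOf_one] at horder
    exact hp.one_lt.ne' horder.symm
  -- Step 3 : g has a fixed point
  push_neg at helno
  obtain ⟨x, hx⟩ := helno g hgG (horder ▸ hp)
  -- Step 4 : number of fixed points of g is divisible by p
  have hiso : IsPGroup p (Subgroup.zpowers g) :=
    IsPGroup.of_card (by rw [Nat.card_zpowers, horder, pow_one])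
  have hmod := hiso.card_modEq_card_fixedPoints Ω
  have hcongr : fixedCount g = Nat.card (MulAction.fixedPoints (Subgroup.zpowers g) Ω) := by
    apply Nat.card_congr
    refine Equiv.subtypeEquiv (Equiv.refl Ω) ?_
    intro a
    simp only [Equiv.refl_apply, MulAction.mem_fixedPoints]
    constructor
    · rintro ha ⟨m, k, rfl⟩
      exact (Function.IsFixedPt.perm_zpow ha k : _)
    · intro ha
      simpa using ha ⟨g, Subgroup.mem_zpowers g⟩
  have hdvdfix : p ∣ fixedCount g := by
    rw [hcongr]
    exact (Nat.modEq_zero_iff_dvd.mp ((hmod.symm.trans (hpdvd.modEq_zero_nat))))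
  have hpos : 0 < fixedCount g := by
    rw [fixedCount]
    have : Nonempty {y : Ω // g y = y} := ⟨⟨x, hx⟩⟩
    exact Nat.card_pos
  exact le_trans (Nat.le_of_dvd hpos hdvdfix) (hfix.1 g hgG hgne)
end

section
/- Let Ω be a finite set and let G ≤ Sym(Ω) be an elusive permutation group of fixity f. Then f ≥ 3. -/
variable {Ω : Type*} [Fintype Ω]

open MulAction in
private lemma three_le_ncard_aux {Ω : Type*} [Fintype Ω] {S : Set Ω} {a b c : Ω}
    (ha : a ∈ S) (hb : b ∈ S) (hc : c ∈ S) (hab : a ≠ b) (hac : a ≠ c) (hbc : b ≠ c) :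
    3 ≤ Nat.card S := by
  classical
  rw [Nat.card_coe_set_eq]
  have hsub : ({a, b, c} : Set Ω) ⊆ S := by
    intro x hx
    rcases hx with rfl | rfl | rfl <;> assumption
  have hle := Set.ncard_le_ncard hsub S.toFinite
  have h3 : ({a, b, c} : Set Ω).ncard = 3 := by
    rw [Set.ncard_insert_of_notMem (by simp [hab, hac]) (Set.toFinite _),
      Set.ncard_insert_of_notMem (by simp [hbc]) (Set.toFinite _), Set.ncard_singleton]
  omega

open MulAction in
private lemma aux_main {Ω : Type*} [Fintype Ω] (G : Subgroup (Equiv.Perm Ω))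
    (htrans : IsTransitive G)
    (hfp : ∀ g ∈ G, (orderOf g).Prime → ∃ x : Ω, g x = x)
    (hfix2 : ∀ g ∈ G, g ≠ 1 → fixedCount g ≤ 2)
    (hn : 3 ≤ Fintype.card Ω) : False := by
  classical
  set n := Fintype.card Ω with hn_def
  haveI : IsPretransitive ↥G Ω := by
    constructor
    intro x y
    obtain ⟨g, hg, hgx⟩ := htrans x y
    exact ⟨⟨g, hg⟩, hgx⟩
  -- n divides the order of G
  have hΩne : Nonempty Ω := Fintype.card_pos_iff.mp (by omega)
  obtain ⟨α₀⟩ := hΩne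
  have hstab0 : (stabilizer ↥G α₀).index = n := by
    rw [index_stabilizer_of_transitive, Nat.card_eq_fintype_card]
  have hndvd : n ∣ Nat.card ↥G := by
    rw [← hstab0]
    exact ⟨Nat.card ↥(stabilizer ↥G α₀), (Subgroup.index_mul_card _).symm⟩
  have main : ∀ p : ℕ, p.Prime → p ∣ n → (Odd p ∨ 4 ∣ n) → False := by
    intro p hp hpn hodd4
    haveI : Fact p.Prime := ⟨hp⟩
    obtain ⟨P⟩ : Nonempty (Sylow p ↥G) := Sylow.nonempty
    -- P is nontrivial
    have hcardG : Nat.card ↥G ≠ 0 := Nat.card_pos.ne'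
    have hfac : 0 < (Nat.card ↥G).factorization p :=
      hp.factorization_pos_of_dvd hcardG (hpn.trans hndvd)
    have hcardP : Nat.card ↥(P : Subgroup ↥G) = p ^ (Nat.card ↥G).factorization p :=
      P.card_eq_multiplicity
    haveI : Nontrivial ↥(P : Subgroup ↥G) := by
      rw [← Finite.one_lt_card_iff_nontrivial, hcardP]
      exact Nat.one_lt_pow (by omega) hp.one_lt
    -- central element of order p
    haveI : Nontrivial ↥(Subgroup.center ↥(P : Subgroup ↥G)) :=
      IsPGroup.center_nontrivial P.2
    obtain ⟨⟨z, hz⟩, hz1⟩ := exists_ne (1 : ↥(Subgroup.center ↥(P : Subgroup ↥G)))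
    have hzne : z ≠ 1 := fun h => hz1 (Subtype.ext h)
    obtain ⟨k, hk⟩ := IsPGroup.iff_orderOf.mp P.2 z
    have hk0 : k ≠ 0 := by
      rintro rfl
      exact hzne (orderOf_eq_one_iff.mp (by simpa using hk))
    set z1 : ↥(P : Subgroup ↥G) := z ^ p ^ (k - 1) with hz1_def
    have hz1c : z1 ∈ Subgroup.center ↥(P : Subgroup ↥G) := Subgroup.pow_mem _ hz _
    have hordz1 : orderOf z1 = p := by
      rw [hz1_def, orderOf_pow, hk, Nat.gcd_eq_right (pow_dvd_pow p (by omega))]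
      rw [Nat.pow_div (by omega) hp.pos, show k - (k - 1) = 1 by omega, pow_one]
    -- push to G and Perm Ω
    set w : ↥G := (z1 : ↥G) with hw_def
    set π : Equiv.Perm Ω := (w : Equiv.Perm Ω) with hπ_def
    have hordπ : orderOf π = p := by
      rw [hπ_def, Subgroup.orderOf_coe, hw_def, Subgroup.orderOf_coe, hordz1]
    have hπG : π ∈ G := w.2
    have hπne : π ≠ 1 := by
      intro h
      rw [h, orderOf_one] at hordπ
      exact absurd hordπ.symm hp.one_lt.ne'
    obtain ⟨α, hα⟩ := hfp π hπG (hordπ ▸ hp)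
    set S : Set Ω := {x | π x = x} with hS_def
    have hαS : α ∈ S := hα
    have hS2 : Nat.card S ≤ 2 := hfix2 π hπG hπne
    -- S is invariant under elements of P
    have hcomm : ∀ u : ↥(P : Subgroup ↥G), π * ((u : ↥G) : Equiv.Perm Ω)
        = ((u : ↥G) : Equiv.Perm Ω) * π := by
      intro u
      have := (Subgroup.mem_center_iff.mp hz1c u).symm
      have h2 : ((z1 * u : ↥(P : Subgroup ↥G)) : ↥G) = ((u * z1 : _) : ↥G) := by rw [this]
      have h3 : w * (u : ↥G) = (u : ↥G) * w := by
        simpa [hw_def] using h2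
      calc π * ((u : ↥G) : Equiv.Perm Ω) = ((w * (u : ↥G) : ↥G) : Equiv.Perm Ω) := by
            simp [hπ_def]
        _ = (((u : ↥G) * w : ↥G) : Equiv.Perm Ω) := by rw [h3]
        _ = ((u : ↥G) : Equiv.Perm Ω) * π := by simp [hπ_def]
    have hinv : ∀ (u : ↥(P : Subgroup ↥G)) (x : Ω), x ∈ S →
        ((u : ↥G) : Equiv.Perm Ω) x ∈ S := by
      intro u x hx
      have : (π * ((u : ↥G) : Equiv.Perm Ω)) x = (((u : ↥G) : Equiv.Perm Ω) * π) x := by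
        rw [hcomm u]
      simp only [Equiv.Perm.mul_apply] at this
      rw [hS_def, Set.mem_setOf_eq, this]
      rw [hS_def, Set.mem_setOf_eq] at hx
      rw [hx]
    by_cases hall : ∀ u : ↥(P : Subgroup ↥G), ((u : ↥G) : Equiv.Perm Ω) α = α
    · -- P fixes α: contradiction with p ∣ n
      have hle : (P : Subgroup ↥G) ≤ stabilizer ↥G α := by
        intro v hv
        rw [mem_stabilizer_iff]
        have := hall ⟨v, hv⟩
        simpa [Subgroup.smul_def, Equiv.Perm.smul_def] using this
      have hstab : (stabilizer ↥G α).index = n := by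
        rw [index_stabilizer_of_transitive, Nat.card_eq_fintype_card]
      have : p ∣ (P : Subgroup ↥G).index :=
        hpn.trans (hstab ▸ Subgroup.index_dvd_of_le hle)
      exact P.not_dvd_index this
    · push_neg at hall
      obtain ⟨u, hu⟩ := hall
      set σ : Equiv.Perm Ω := ((u : ↥G) : Equiv.Perm Ω) with hσ_def
      set β : Ω := σ α with hβ_def
      have hβS : β ∈ S := hinv u α hαS
      have hβα : β ≠ α := hu
      -- σ swaps α and β
      have hσβ : σ β = α := by
        have hσβS : σ β ∈ S := hinv u β hβS
        have h1 : σ β ≠ β := fun h => hβα (σ.injective (by rw [h, hβ_def]))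
        by_contra h2
        exact absurd (three_le_ncard_aux hαS hβS hσβS (Ne.symm hβα) (Ne.symm h2) h1.symm)
          (by omega)
      -- p must be 2
      have hfix2j : ∀ j : ℕ, (σ ^ (2 * j)) α = α := by
        intro j
        induction j with
        | zero => simp
        | succ j ih =>
          have : σ ^ (2 * (j + 1)) = σ ^ (2 * j) * (σ * σ) := by
            rw [← pow_two, ← pow_add]; ring_nf
          rw [this, Equiv.Perm.mul_apply, Equiv.Perm.mul_apply, ← hβ_def, hσβ, ih]
      have hpeven : p = 2 := by
        by_contra hp2
        have hodd : Odd p := hp.odd_of_ne_two hp2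
        obtain ⟨m, hm⟩ := IsPGroup.iff_orderOf.mp P.2 u
        have hoddpm : Odd (p ^ m) := hodd.pow
        obtain ⟨j, hj⟩ := hoddpm
        have hσord : σ ^ p ^ m = 1 := by
          have : (u ^ p ^ m : ↥(P : Subgroup ↥G)) = 1 := by
            rw [← hm]; exact pow_orderOf_eq_one u
          have h2 : ((u : ↥G) ^ p ^ m : ↥G) = 1 := by
            exact_mod_cast congrArg (fun x : ↥(P : Subgroup ↥G) => ((x : ↥G))) this
          calc σ ^ p ^ m = (((u : ↥G) ^ p ^ m : ↥G) : Equiv.Perm Ω) := by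
                simp [hσ_def]
            _ = 1 := by rw [h2]; rfl
        have : (σ ^ p ^ m) α = α := by rw [hσord]; rfl
        rw [hj, pow_succ', Equiv.Perm.mul_apply, hfix2j j] at this
        exact hβα (by rw [hβ_def, this])
      -- now p = 2 and 4 ∣ n
      have h4n : 4 ∣ n := by
        rcases hodd4 with ho | h4
        · exact absurd hpeven (by rintro rfl; exact (Nat.not_odd_iff_even.mpr (by norm_num)) ho)
        · exact h4
      -- Q = P ⊓ stabilizer
      set Q : Subgroup ↥G := (P : Subgroup ↥G) ⊓ stabilizer ↥G α with hQ_def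
      have hQP : Q ≤ (P : Subgroup ↥G) := inf_le_left
      have hQst : Q ≤ stabilizer ↥G α := inf_le_right
      have hsubOf : Q.subgroupOf (P : Subgroup ↥G) = stabilizer ↥(P : Subgroup ↥G) α := by
        ext v
        simp only [Subgroup.mem_subgroupOf, hQ_def, Subgroup.mem_inf, mem_stabilizer_iff,
          Subgroup.smul_def, Equiv.Perm.smul_def]
        constructor
        · rintro ⟨-, h⟩; exact h
        · intro h; exact ⟨v.2, h⟩
      have horb_sub : orbit ↥(P : Subgroup ↥G) α ⊆ S := by
        rintro x ⟨v, rfl⟩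
        have := hinv v α hαS
        simpa [Subgroup.smul_def, Equiv.Perm.smul_def] using this
      have horb_card : (orbit ↥(P : Subgroup ↥G) α).ncard ∣ 2 := by
        have hle2 : (orbit ↥(P : Subgroup ↥G) α).ncard ≤ 2 := by
          have := Set.ncard_le_ncard horb_sub S.toFinite
          rw [← Nat.card_coe_set_eq S] at this
          omega
        have hge1 : 1 ≤ (orbit ↥(P : Subgroup ↥G) α).ncard := by
          rw [Nat.one_le_iff_ne_zero, Ne, Set.ncard_eq_zero (Set.toFinite _)]
          exact Set.nonempty_iff_ne_empty.mp ⟨α, mem_orbit_self α⟩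
        interval_cases h : (orbit ↥(P : Subgroup ↥G) α).ncard <;> norm_num
      have hrel : Q.relIndex (P : Subgroup ↥G) ∣ 2 := by
        rw [Subgroup.relIndex, hsubOf, index_stabilizer]
        exact horb_card
      have hQindex : Q.relIndex (P : Subgroup ↥G) * (P : Subgroup ↥G).index = Q.index :=
        Subgroup.relIndex_mul_index hQP
      have hstab : (stabilizer ↥G α).index = n := by
        rw [index_stabilizer_of_transitive, Nat.card_eq_fintype_card]
      have hnQ : n ∣ Q.index := hstab ▸ Subgroup.index_dvd_of_le hQst
      have h4Q : 4 ∣ Q.relIndex (P : Subgroup ↥G) * (P : Subgroup ↥G).index := by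
        rw [hQindex]; exact h4n.trans hnQ
      have h2idx : ¬ (2 ∣ (P : Subgroup ↥G).index) := hpeven ▸ P.not_dvd_index
      have : 4 ∣ 2 * (P : Subgroup ↥G).index :=
        dvd_trans h4Q (mul_dvd_mul_right hrel _)
      omega
  -- choose a suitable prime
  by_cases h4 : 4 ∣ n
  · exact main 2 Nat.prime_two (dvd_trans (by norm_num) h4) (Or.inr h4)
  · -- find an odd prime divisor
    have : ∃ m : ℕ, Odd m ∧ m ∣ n ∧ 2 ≤ m := by
      rcases Nat.even_or_odd n with he | ho
      · obtain ⟨c, hc⟩ := he.two_dvd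
        refine ⟨c, ?_, ⟨2, by omega⟩, by omega⟩
        rw [Nat.odd_iff]
        by_contra h
        exact h4 ⟨c / 2, by omega⟩
      · exact ⟨n, ho, dvd_refl n, by omega⟩
    obtain ⟨m, hmo, hmn, hm2⟩ := this
    have hm1 : m ≠ 1 := by omega
    have hpp : m.minFac.Prime := Nat.minFac_prime hm1
    have hpodd : Odd m.minFac := by
      rcases hpp.eq_two_or_odd' with h2 | ho
      · exfalso
        have := Nat.minFac_dvd m
        rw [h2] at this
        rw [Nat.odd_iff, Nat.two_dvd_ne_zero.symm] at hmo
        exact hmo this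
      · exact ho
    exact main m.minFac hpp ((Nat.minFac_dvd m).trans hmn) (Or.inl hpodd)

/-- an elusive group of fixity `f` satisfies `f ≥ 3`. -/
theorem stmt_4 (G : Subgroup (Equiv.Perm Ω)) (f : ℕ) (hel : IsElusive G)
    (hfix : HasFixity G f) :
    3 ≤ f := by
  classical
  by_contra hlt
  push_neg at hlt
  have hfix2 : ∀ g ∈ G, g ≠ 1 → fixedCount g ≤ 2 := fun g hg h1 =>
    le_trans (hfix.1 g hg h1) (by omega)
  have hfp : ∀ g ∈ G, (orderOf g).Prime → ∃ x : Ω, g x = x := by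
    intro g hg hord
    by_contra hno
    push_neg at hno
    exact hel.2 ⟨g, hg, hord, hno⟩
  rcases lt_or_ge (Fintype.card Ω) 3 with hsm | hge
  · obtain ⟨g₀, hg₀, hg₀ne, -⟩ := hfix.2
    rcases lt_or_ge (Fintype.card Ω) 2 with h1 | h2
    · haveI : Subsingleton Ω := Fintype.card_le_one_iff_subsingleton.mp (by omega)
      exact hg₀ne (Equiv.ext fun x => Subsingleton.elim _ _)
    · have hc2 : Fintype.card Ω = 2 := by omega
      obtain ⟨a, b, hab, huniv⟩ := (Nat.card_eq_two_iff (α := Ω)).mp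
        (by rw [Nat.card_eq_fintype_card]; exact hc2)
      obtain ⟨g, hg, hga⟩ := hel.1 a b
      have hmem : ∀ x : Ω, x = a ∨ x = b := by
        intro x
        have : x ∈ ({a, b} : Set Ω) := by rw [huniv]; trivial
        simpa using this
      have hgb : g b = a := by
        rcases hmem (g b) with h | h
        · exact h
        · exact absurd (g.injective (hga.trans h.symm)) hab
      have hgne : g ≠ 1 := by
        intro h; rw [h] at hga; exact hab (hga ▸ rfl)
      have hg2 : g ^ 2 = 1 := by
        ext x
        rcases hmem x with rfl | rfl <;>
          simp [pow_two, Equiv.Perm.mul_apply, hga, hgb]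
      have hord : orderOf g = 2 := orderOf_eq_prime hg2 hgne
      refine hel.2 ⟨g, hg, by rw [hord]; exact Nat.prime_two, ?_⟩
      intro x
      rcases hmem x with rfl | rfl
      · rw [hga]; exact fun h => hab h.symm
      · rw [hgb]; exact fun h => hab h
  · exact aux_main G hel.1 hfp hfix2 hge
end

section
/- Let Ω be a finite set and let G ≤ Sym(Ω) be an elusive permutation group of fixity f ≥ 3. Then every prime divisor of |Ω| is at most f. -/
variable {Ω : Type*} [Fintype Ω]

/-- for an elusive group of fixity `f ≥ 3`, every prime divisor of
`|Ω|` is at most `f`. -/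
theorem stmt_5 (G : Subgroup (Equiv.Perm Ω)) (f : ℕ) (hel : IsElusive G)
    (hfix : HasFixity G f) (hf : 3 ≤ f) :
    ∀ p : ℕ, p.Prime → p ∣ Fintype.card Ω → p ≤ f := by
  intro p hp hpΩ
  classical
  obtain ⟨htrans, helu⟩ := hel
  rcases isEmpty_or_nonempty Ω with hE | hNE
  · obtain ⟨g, _, hg1, _⟩ := hfix.2
    exact absurd (Subsingleton.elim g 1) hg1
  obtain ⟨α⟩ := hNE
  have horb : MulAction.orbit G α = Set.univ := by
    ext β
    simp only [Set.mem_univ, iff_true, MulAction.mem_orbit_iff]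
    obtain ⟨g, hg, hgab⟩ := htrans α β
    exact ⟨⟨g, hg⟩, hgab⟩
  have hcard_orbit : Fintype.card (MulAction.orbit G α) = Fintype.card Ω :=
    Fintype.card_congr ((Equiv.setCongr horb).trans (Equiv.Set.univ Ω))
  have hos := MulAction.card_orbit_mul_card_stabilizer_eq_card_group G α
  have hcardG : p ∣ Fintype.card G := by
    refine dvd_trans ?_ ⟨_, hos.symm⟩
    rw [hcard_orbit]; exact hpΩ
  haveI : Fact p.Prime := ⟨hp⟩
  obtain ⟨g, hg⟩ := exists_prime_orderOf_dvd_card (G := G) p hcardG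
  have hord : orderOf (g : Equiv.Perm Ω) = p := by
    rw [← hg]
    exact orderOf_injective G.subtype (Subgroup.subtype_injective G) g
  -- g has a fixed point
  have hfixed : ∃ x : Ω, (g : Equiv.Perm Ω) x = x := by
    by_contra hc
    push_neg at hc
    exact helu ⟨g, g.2, hord ▸ hp, fun x => hc x⟩
  -- p-group zpowers g
  set gp : Equiv.Perm Ω := (g : Equiv.Perm Ω) with hgp
  have hpg : IsPGroup p (Subgroup.zpowers gp) := by
    apply IsPGroup.of_card (n := 1)
    rw [pow_one, Nat.card_zpowers, hord]
  have hmod := hpg.card_modEq_card_fixedPoints Ω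
  have hfpset : MulAction.fixedPoints (Subgroup.zpowers gp) Ω = {x : Ω | gp x = x} := by
    ext x
    constructor
    · intro hx
      exact hx ⟨gp, Subgroup.mem_zpowers gp⟩
    · intro hx h
      obtain ⟨k, hk⟩ := h.2
      have : h • x = (h : Equiv.Perm Ω) x := rfl
      rw [this, ← hk]
      have : ∀ n : ℕ, (gp ^ n) x = x := by
        intro n
        induction n with
        | zero => rfl
        | succ n ih =>
          rw [pow_succ, Equiv.Perm.mul_apply, show gp x = x from hx]
          exact ih
      cases k with
      | ofNat n => simpa using this n
      | negSucc n =>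
        have h1 : (gp ^ (n+1)) x = x := this (n+1)
        have : (gp ^ (n+1 : ℕ) : Equiv.Perm Ω)⁻¹ x = x := by
          conv_lhs => rw [← h1]
          simp
        simpa [zpow_negSucc] using this
  have hfpcard : Nat.card (MulAction.fixedPoints (Subgroup.zpowers gp) Ω) = fixedCount gp := by
    rw [hfpset]; rfl
  have hdvd : p ∣ fixedCount gp := by
    rw [← hfpcard]
    have h1 : p ∣ Nat.card Ω := by rwa [Nat.card_eq_fintype_card]
    exact (Nat.modEq_zero_iff_dvd).mp (hmod.symm.trans (Nat.modEq_zero_iff_dvd.mpr h1))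
  have hpos : 0 < fixedCount gp := by
    obtain ⟨x, hx⟩ := hfixed
    have : Nonempty {x : Ω // gp x = x} := ⟨⟨x, hx⟩⟩
    exact Nat.card_pos
  have hne1 : gp ≠ 1 := by
    intro h
    rw [h, orderOf_one] at hord
    exact hp.one_lt.ne (hord.symm ▸ rfl) |>.elim
  calc p ≤ fixedCount gp := Nat.le_of_dvd hpos hdvd
    _ ≤ f := hfix.1 gp g.2 hne1
end

section
/- Let Ω be a finite set of odd cardinality and let G ≤ Sym(Ω) be an elusive permutation group of fixity f. Then f ≥ 5. -/
variable {Ω : Type*} [Fintype Ω]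

-- fixed points of g equal fixed points of zpowers g
lemma fix_zpow (g : Equiv.Perm Ω) (x : Ω) (hx : g x = x) (n : ℤ) : (g ^ n) x = x := by
  have hnat : ∀ m : ℕ, (g ^ m) x = x := by
    intro m
    induction m with
    | zero => simp
    | succ k ih => rw [pow_succ, Equiv.Perm.mul_apply, hx, ih]
  rcases n with m | m
  · simpa using hnat m
  · rw [zpow_negSucc]
    have := hnat (m + 1)
    conv_lhs => rw [← this]
    simp

lemma fixedCount_modEq (g : Equiv.Perm Ω) (hp : (orderOf g).Prime) :
    Fintype.card Ω ≡ fixedCount g [MOD orderOf g] := by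
  set p := orderOf g
  haveI : Fact p.Prime := ⟨hp⟩
  set H := Subgroup.zpowers g
  have hcard : Nat.card H = p := Nat.card_zpowers g
  have hpg : IsPGroup p H := IsPGroup.of_card (by rw [hcard, pow_one])
  have h1 : Nat.card (MulAction.fixedPoints H Ω) = fixedCount g := by
    apply Nat.card_congr
    apply Equiv.subtypeEquivRight
    intro x
    constructor
    · intro hfx
      exact hfx ⟨g, Subgroup.mem_zpowers g⟩
    · intro hgx h
      obtain ⟨n, hn⟩ := h.2
      show (h : Equiv.Perm Ω) x = x
      rw [← hn]
      exact fix_zpow g x hgx n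
  have := hpg.card_modEq_card_fixedPoints Ω
  rwa [Nat.card_eq_fintype_card, h1] at this

/-- an elusive group of fixity `f` on a set of odd cardinality
satisfies `f ≥ 5`. -/
theorem stmt_7 (G : Subgroup (Equiv.Perm Ω)) (f : ℕ) (hodd : Odd (Fintype.card Ω))
    (hel : IsElusive G) (hfix : HasFixity G f) :
    5 ≤ f := by
  classical
  obtain ⟨htrans, helus⟩ := hel
  obtain ⟨hub, g₀, hg₀G, hg₀ne, hg₀f⟩ := hfix
  set n := Fintype.card Ω with hn
  have hn0 : n ≠ 0 := by rintro h; rw [h] at hodd; simp [Nat.odd_iff] at hodd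
  haveI hΩne : Nonempty Ω := Fintype.card_pos_iff.mp (Nat.pos_of_ne_zero hn0)
  have hn1 : n ≠ 1 := by
    intro h
    haveI : Subsingleton Ω := Fintype.card_le_one_iff_subsingleton.mp (le_of_eq h)
    exact hg₀ne (Equiv.ext fun x => Subsingleton.elim _ _)
  -- each prime-order element of G has a fixed point
  push_neg at helus
  have hpos : ∀ g : Equiv.Perm Ω, g ∈ G → (orderOf g).Prime → 0 < fixedCount g := by
    intro g hg hp
    obtain ⟨x, hx⟩ := helus g hg hp
    haveI : Nonempty {x : Ω // g x = x} := ⟨⟨x, hx⟩⟩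
    exact Nat.card_pos
  -- G acts pretransitively
  haveI hpt : MulAction.IsPretransitive G Ω := by
    constructor
    intro x y
    obtain ⟨g, hg, hgx⟩ := htrans x y
    exact ⟨⟨g, hg⟩, hgx⟩
  haveI : Finite G := inferInstance
  have hGcard0 : Nat.card G ≠ 0 := Nat.card_pos.ne'
  have hstabG : ∀ α : Ω, Nat.card (MulAction.stabilizer G α) * n = Nat.card G := by
    intro α
    have h := Subgroup.card_mul_index (MulAction.stabilizer G α)
    rw [MulAction.index_stabilizer_of_transitive] at h
    rw [hn, ← Nat.card_eq_fintype_card]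
    exact h
  have hndvd : n ∣ Nat.card G :=
    ⟨Nat.card (MulAction.stabilizer G (Classical.arbitrary Ω)), by
      rw [mul_comm]; exact (hstabG _).symm⟩
  -- Cauchy for primes dividing n
  have cauchy : ∀ p : ℕ, p.Prime → p ∣ n → ∃ g ∈ G, orderOf g = p := by
    intro p hp hpn
    haveI : Fact p.Prime := ⟨hp⟩
    obtain ⟨x, hx⟩ := exists_prime_orderOf_dvd_card' (G := G) p (hpn.trans hndvd)
    exact ⟨(x : Equiv.Perm Ω), x.2, by rw [Subgroup.orderOf_coe, hx]⟩
  -- prime-order elements with order dividing n have fixedCount divisible by the order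
  have hdvdfix : ∀ g : Equiv.Perm Ω, g ∈ G → (orderOf g).Prime → orderOf g ∣ n →
      orderOf g ∣ fixedCount g := by
    intro g hg hp hpn
    have h1 := fixedCount_modEq g hp
    have : (0 : ℕ) ≡ fixedCount g [MOD orderOf g] :=
      ((Nat.modEq_zero_iff_dvd.mpr hpn).symm.trans h1)
    exact (Nat.modEq_zero_iff_dvd.mp this.symm)
  by_cases hq : ∃ q : ℕ, q.Prime ∧ q ∣ n ∧ q ≠ 3
  · obtain ⟨q, hqp, hqn, hq3⟩ := hq
    have hq2 : q ≠ 2 := by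
      rintro rfl
      rw [← Nat.not_even_iff_odd] at hodd
      exact hodd ((even_iff_two_dvd).mpr hqn)
    have hq5 : 5 ≤ q := by
      have h2le := hqp.two_le
      by_contra h
      push_neg at h
      have : q = 4 := by omega
      rw [this] at hqp
      norm_num at hqp
    obtain ⟨g, hgG, hgo⟩ := cauchy q hqp hqn
    have hgne : g ≠ 1 := by
      intro h; rw [h, orderOf_one] at hgo; omega
    have h1 : q ∣ fixedCount g := hgo ▸ hdvdfix g hgG (hgo ▸ hqp) (hgo ▸ hqn)
    have h2 : 0 < fixedCount g := hpos g hgG (hgo ▸ hqp)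
    have := hub g hgG hgne
    have := Nat.le_of_dvd h2 h1
    omega
  · -- n is a power of 3
    push_neg at hq
    by_contra hf5
    push_neg at hf5
    have hfle : f ≤ 4 := by omega
    have hfix3 : ∀ g : Equiv.Perm Ω, g ∈ G → orderOf g = 3 → fixedCount g = 3 := by
      intro g hg hgo
      have hp3 : (orderOf g).Prime := hgo ▸ (by norm_num)
      have h3n : 3 ∣ n := by
        have hpf : n.minFac.Prime := Nat.minFac_prime hn1
        have := hq n.minFac hpf (Nat.minFac_dvd n)
        rw [← this]; exact Nat.minFac_dvd n
      have h1 : 3 ∣ fixedCount g := hgo ▸ hdvdfix g hg hp3 (hgo ▸ h3n)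
      have h2 : 0 < fixedCount g := hpos g hg hp3
      have hgne : g ≠ 1 := by intro h; rw [h, orderOf_one] at hgo; omega
      have := hub g hg hgne
      omega
    -- n = 3 ^ k
    obtain ⟨k, hk⟩ : ∃ k, n = 3 ^ k := by
      exact ⟨_, Nat.eq_prime_pow_of_unique_prime_dvd hn0 (fun {d} hd hdn => hq d hd hdn)⟩
    have hk1 : 1 ≤ k := by
      rcases Nat.eq_zero_or_pos k with h | h
      · rw [h, pow_zero] at hk; exact absurd hk hn1
      · exact h
    -- Sylow 3-subgroup
    haveI : Fact (Nat.Prime 3) := ⟨by norm_num⟩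
    obtain ⟨P⟩ : Nonempty (Sylow 3 G) := inferInstance
    set v := (Nat.card G).factorization 3 with hv
    have hPcard : Nat.card P = 3 ^ v := P.card_eq_multiplicity
    -- P is transitive
    have horbit : ∀ α : Ω, MulAction.orbit (P : Subgroup G) α = Set.univ := by
      intro α
      set NS := Nat.card (MulAction.stabilizer (P : Subgroup G) α) with hNS
      have h1 : NS ∣ 3 ^ v := hPcard ▸ Subgroup.card_subgroup_dvd_card _
      obtain ⟨j, hjv, hNSj⟩ := (Nat.dvd_prime_pow (by norm_num)).mp h1
      -- NS divides |stab_G α|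
      have hinj : NS ∣ Nat.card (MulAction.stabilizer G α) := by
        have hmem : ∀ h : MulAction.stabilizer (P : Subgroup G) α,
            ((h : (P : Subgroup G)) : G) ∈ MulAction.stabilizer G α := by
          intro h
          have := h.2
          rwa [MulAction.mem_stabilizer_iff] at this ⊢
        refine Subgroup.card_dvd_of_injective
          (MonoidHom.mk' (fun h => (⟨((h : (P : Subgroup G)) : G), hmem h⟩ :
              MulAction.stabilizer G α)) (fun a b => rfl)) ?_
        intro a b hab
        have h2 := Subtype.ext_iff.mp hab
        exact Subtype.ext (Subtype.ext h2)
      have h3 : 3 ^ (j + k) ∣ Nat.card G := by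
        rw [pow_add, ← hstabG α, hk]
        exact mul_dvd_mul (hNSj ▸ hinj) dvd_rfl
      have hjk : j + k ≤ v := by
        rw [hv]
        exact (Nat.Prime.pow_dvd_iff_le_factorization (by norm_num) hGcard0).mp h3
      -- orbit size
      have horb : Nat.card (MulAction.orbit (P : Subgroup G) α) * NS = 3 ^ v := by
        have h4 := Subgroup.card_mul_index (MulAction.stabilizer (P : Subgroup G) α)
        rw [MulAction.index_stabilizer, hPcard] at h4
        rw [mul_comm, Nat.card_coe_set_eq]
        exact h4
      have horbcard : Nat.card (MulAction.orbit (P : Subgroup G) α) = 3 ^ (v - j) := by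
        have hpow : (3:ℕ) ^ (v - j) * 3 ^ j = 3 ^ v := by
          rw [← pow_add]
          congr 1
          omega
        rw [hNSj, ← hpow] at horb
        exact Nat.eq_of_mul_eq_mul_right (pow_pos (by norm_num) j) horb
      have hle : Nat.card (MulAction.orbit (P : Subgroup G) α) ≤ n := by
        rw [hn, ← Nat.card_eq_fintype_card]
        exact Nat.card_le_card_of_injective _ Subtype.val_injective
      have hge : n ≤ Nat.card (MulAction.orbit (P : Subgroup G) α) := by
        rw [horbcard, hk]
        exact Nat.pow_le_pow_right (by norm_num) (by omega)
      apply Set.eq_of_subset_of_ncard_le (Set.subset_univ _)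
      rw [Set.ncard_univ, ← Nat.card_coe_set_eq, Nat.card_eq_fintype_card, ← hn]
      omega
    -- a central element of order 3 in P
    have hvk : 1 ≤ v := by
      have hd : (3:ℕ) ^ k ∣ Nat.card G := hk ▸ hndvd
      have := (Nat.Prime.pow_dvd_iff_le_factorization (by norm_num) hGcard0).mp hd
      omega
    haveI hPnt : Nontrivial (P : Subgroup G) :=
      Finite.one_lt_card_iff_nontrivial.mp
        (by rw [hPcard]; exact Nat.one_lt_pow (by omega) (by norm_num))
    haveI : Finite (P : Subgroup G) := inferInstance
    haveI hZnt : Nontrivial (Subgroup.center (P : Subgroup G)) := P.2.center_nontrivial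
    have hZdvd : Nat.card (Subgroup.center (P : Subgroup G)) ∣ 3 ^ v :=
      hPcard ▸ Subgroup.card_subgroup_dvd_card _
    obtain ⟨m, hmv, hZm⟩ := (Nat.dvd_prime_pow (by norm_num)).mp hZdvd
    have hZ1 : 1 < Nat.card (Subgroup.center (P : Subgroup G)) :=
      Finite.one_lt_card_iff_nontrivial.mpr hZnt
    have h3Z : 3 ∣ Nat.card (Subgroup.center (P : Subgroup G)) := by
      rw [hZm]
      refine dvd_pow_self 3 ?_
      intro h
      rw [h, pow_zero] at hZm
      omega
    obtain ⟨z, hz⟩ := exists_prime_orderOf_dvd_card' (G := Subgroup.center (P : Subgroup G)) 3 h3Z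
    -- the permutation ζ
    have hζo : orderOf ((((z : (P : Subgroup G)) : G)) : Equiv.Perm Ω) = 3 := by
      rw [Subgroup.orderOf_coe, Subgroup.orderOf_coe, Subgroup.orderOf_coe, hz]
    have hζG : ((((z : (P : Subgroup G)) : G)) : Equiv.Perm Ω) ∈ G :=
      ((z : (P : Subgroup G)) : G).2
    have hζfix : fixedCount ((((z : (P : Subgroup G)) : G)) : Equiv.Perm Ω) = 3 :=
      hfix3 _ hζG hζo
    have hnonempty : Nonempty {x : Ω // ((((z : (P : Subgroup G)) : G)) : Equiv.Perm Ω) x = x} := by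
      have : 0 < fixedCount ((((z : (P : Subgroup G)) : G)) : Equiv.Perm Ω) := by
        rw [hζfix]; norm_num
      exact (Nat.card_pos_iff.mp this).1
    obtain ⟨x₀, hx₀⟩ := hnonempty
    have hall : ∀ x : Ω, ((((z : (P : Subgroup G)) : G)) : Equiv.Perm Ω) x = x := by
      intro x
      have hx : x ∈ MulAction.orbit (P : Subgroup G) x₀ := by
        rw [horbit x₀]; trivial
      obtain ⟨h, hh⟩ := hx
      change h • x₀ = x at hh
      have hc : h * (z : (P : Subgroup G)) = (z : (P : Subgroup G)) * h :=
        Subgroup.mem_center_iff.mp z.2 h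
      have hcomm : (((h : G)) : Equiv.Perm Ω) * ((((z : (P : Subgroup G)) : G)) : Equiv.Perm Ω)
          = ((((z : (P : Subgroup G)) : G)) : Equiv.Perm Ω) * (((h : G)) : Equiv.Perm Ω) := by
        have := congrArg (fun w : (P : Subgroup G) => ((w : G) : Equiv.Perm Ω)) hc
        simpa using this
      have hsmul : h • x₀ = (((h : G)) : Equiv.Perm Ω) x₀ := rfl
      rw [← hh, hsmul, ← Equiv.Perm.mul_apply, ← hcomm, Equiv.Perm.mul_apply, hx₀]
    have hζ1 : ((((z : (P : Subgroup G)) : G)) : Equiv.Perm Ω) = 1 := Equiv.ext hall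
    rw [hζ1, orderOf_one] at hζo
    norm_num at hζo
end

section
/- Let Ω be a finite set and let G ≤ Sym(Ω) be an elusive permutation group of fixity f such that |G| is odd. Then f ≥ 5. -/
variable {Ω : Type*} [Fintype Ω]

lemma forall_of_card_subtype_eq {α : Type*} [Fintype α] {p : α → Prop}
    (h : Nat.card {x // p x} = Fintype.card α) : ∀ x, p x := by
  classical
  intro x
  rw [Nat.card_eq_fintype_card, Fintype.card_subtype] at h
  have h2 := Finset.eq_univ_of_card _ h
  have hx : x ∈ Finset.univ.filter p := by rw [h2]; exact Finset.mem_univ x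
  exact (Finset.mem_filter.mp hx).2

lemma key_lemma (G : Subgroup (Equiv.Perm Ω)) (f : ℕ) (hodd : Odd (Nat.card ↥G))
    (hel : IsElusive G) (hbound : ∀ g ∈ G, g ≠ 1 → fixedCount g ≤ f) (hf4 : f ≤ 4)
    (hn2 : 2 ≤ Fintype.card Ω) (q : ℕ) (hq : q.Prime) (hqn : q ∣ Fintype.card Ω) :
    q = 3 ∧ (Fintype.card Ω).factorization 3 ≤ 1 ∧ Fintype.card Ω ≠ 3 := by
  classical
  haveI : Fact q.Prime := ⟨hq⟩
  set n := Fintype.card Ω with hn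
  haveI htrans : MulAction.IsPretransitive ↥G Ω := by
    constructor
    intro a b
    obtain ⟨g, hgG, hgab⟩ := hel.1 a b
    exact ⟨⟨g, hgG⟩, hgab⟩
  have horb : ∀ x : Ω, n * Nat.card (MulAction.stabilizer ↥G x) = Nat.card ↥G := by
    intro x
    rw [hn, ← Nat.card_eq_fintype_card, ← MulAction.index_stabilizer_of_transitive ↥G x,
      Subgroup.index_mul_card]
  have hGpos : 0 < Nat.card ↥G := Nat.card_pos
  haveI : Nonempty Ω := Fintype.card_pos_iff.mp (by omega)
  have hndvd : n ∣ Nat.card ↥G := ⟨_, (horb (Classical.arbitrary Ω)).symm⟩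
  have hqG : q ∣ Nat.card ↥G := hqn.trans hndvd
  haveI : Finite ↥G := Subtype.finite
  obtain ⟨P⟩ : Nonempty (Sylow q ↥G) := Sylow.nonempty
  set k := (Nat.card ↥G).factorization q with hk
  set Q : Subgroup ↥G := (P : Subgroup ↥G) with hQ
  have hQpgroup : IsPGroup q ↥Q := P.isPGroup'
  have hcardP : Nat.card ↥Q = q ^ k := P.card_eq_multiplicity
  have hk1 : 1 ≤ k := by
    have h1 : q ^ 1 ∣ Nat.card ↥G := by rw [pow_one]; exact hqG
    have := (hq.pow_dvd_iff_le_factorization hGpos.ne').mp h1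
    omega
  haveI : Nontrivial ↥Q := by
    apply Finite.one_lt_card_iff_nontrivial.mp
    rw [hcardP]
    exact Nat.one_lt_pow (by omega) hq.one_lt
  -- a central element of order q in P
  have hqcenter : q ∣ Nat.card ↥(Subgroup.center ↥Q) := by
    haveI := hQpgroup.center_nontrivial
    obtain ⟨m, hm⟩ := IsPGroup.iff_card.mp
      (hQpgroup.to_subgroup (Subgroup.center ↥Q))
    rw [hm]
    refine dvd_pow_self q ?_
    rintro rfl
    rw [pow_zero] at hm
    exact (Finite.one_lt_card).ne' hm
  obtain ⟨z₀, hz₀⟩ := exists_prime_orderOf_dvd_card' q hqcenter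
  set z : ↥Q := (z₀ : ↥Q) with hzdef
  have horderz : orderOf z = q :=
    (orderOf_injective (Subgroup.center ↥Q).subtype (Subgroup.subtype_injective _) z₀).trans hz₀
  have hzcen : ∀ g : ↥Q, g * z = z * g := fun g => (Subgroup.mem_center_iff.mp z₀.2) g
  -- the permutation ζ
  set φ : ↥Q →* Equiv.Perm Ω := G.subtype.comp Q.subtype with hφ
  set ζ : Equiv.Perm Ω := φ z with hζ
  have hφinj : Function.Injective φ :=
    (Subgroup.subtype_injective G).comp (Subgroup.subtype_injective _)
  have horderζ : orderOf ζ = q := (orderOf_injective φ hφinj z).trans horderz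
  have hζG : ζ ∈ G := ((Q.subtype z) : ↥G).2
  have hζne : ζ ≠ 1 := by
    intro h
    rw [h, orderOf_one] at horderζ
    exact hq.one_lt.ne' horderζ.symm
  have hx0 : ∃ x : Ω, ζ x = x := by
    by_contra h
    push_neg at h
    exact hel.2 ⟨ζ, hζG, by rw [horderζ]; exact hq, h⟩
  have hcomm : ∀ (g : ↥Q) (x : Ω), ζ (φ g x) = φ g (ζ x) := by
    intro g x
    have : ζ * φ g = φ g * ζ := by
      rw [hζ, ← map_mul, ← map_mul, hzcen g]
    calc ζ (φ g x) = (ζ * φ g) x := rfl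
      _ = (φ g * ζ) x := by rw [this]
      _ = φ g (ζ x) := rfl
  -- action of P on the fixed set of ζ
  letI act : MulAction ↥Q {x : Ω // ζ x = x} :=
    { smul := fun g x => ⟨φ g x.1, by rw [hcomm g x.1, x.2]⟩
      one_smul := fun x => Subtype.ext (show φ 1 x.1 = x.1 by rw [map_one]; rfl)
      mul_smul := fun g h x => Subtype.ext
        (show φ (g * h) x.1 = φ g (φ h x.1) by rw [map_mul]; rfl) }
  have hsmul_coe : ∀ (g : ↥Q) (x : {x : Ω // ζ x = x}), ((g • x : {x : Ω // ζ x = x}) : Ω) = φ g x.1 :=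
    fun g x => rfl
  have hmod : Nat.card {x : Ω // ζ x = x} ≡
      Nat.card (MulAction.fixedPoints ↥Q {x : Ω // ζ x = x}) [MOD q] :=
    hQpgroup.card_modEq_card_fixedPoints _
  -- a P-fixed point is impossible
  have hnofix : ∀ x : Ω, ¬ (Q ≤ MulAction.stabilizer ↥G x) := by
    intro x hle
    have hdvd1 : q ^ k ∣ Nat.card (MulAction.stabilizer ↥G x) := by
      rw [← hcardP]
      exact Subgroup.card_dvd_of_le hle
    have hdvd2 : q ^ (k + 1) ∣ Nat.card ↥G := by
      rw [← horb x, pow_succ, mul_comm (q ^ k) q]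
      exact Nat.mul_dvd_mul hqn hdvd1
    have := (hq.pow_dvd_iff_le_factorization hGpos.ne').mp hdvd2
    omega
  have hfpempty : IsEmpty (MulAction.fixedPoints ↥Q {x : Ω // ζ x = x}) := by
    rw [isEmpty_iff]
    rintro ⟨x, hx⟩
    refine hnofix x.1 ?_
    intro u hu
    rw [MulAction.mem_stabilizer_iff]
    have := hx ⟨u, hu⟩
    have := congrArg Subtype.val (this : (⟨u, hu⟩ : ↥P) • x = x)
    rw [hsmul_coe] at this
    exact this
  have hcard0 : Nat.card (MulAction.fixedPoints ↥Q {x : Ω // ζ x = x}) = 0 :=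
    @Nat.card_of_isEmpty _ hfpempty
  have hqS : q ∣ Nat.card {x : Ω // ζ x = x} := by
    have h := hmod
    rw [hcard0] at h
    exact Nat.modEq_zero_iff_dvd.mp h
  haveI : Nonempty {x : Ω // ζ x = x} := ⟨⟨hx0.choose, hx0.choose_spec⟩⟩
  have hSpos : 0 < Nat.card {x : Ω // ζ x = x} := Nat.card_pos
  have hSle : Nat.card {x : Ω // ζ x = x} ≤ 4 := le_trans (hbound ζ hζG hζne) hf4
  have hq2 : q ≠ 2 := by
    rintro rfl
    rw [Nat.odd_iff] at hodd
    obtain ⟨c, hc⟩ := hqG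
    omega
  have hq3 : q = 3 := by
    have hqle : q ≤ 4 := le_trans (Nat.le_of_dvd hSpos hqS) hSle
    have h2 := hq.two_le
    rcases (by omega : q = 2 ∨ q = 3 ∨ q = 4) with h | h | h
    · exact absurd h hq2
    · exact h
    · rw [h] at hq; norm_num at hq
  subst hq3
  have hS3 : Nat.card {x : Ω // ζ x = x} = 3 := by
    obtain ⟨c, hc⟩ := hqS
    omega
  have hnne3 : n ≠ 3 := by
    intro h3
    apply hζne
    have hall : ∀ x : Ω, ζ x = x :=
      forall_of_card_subtype_eq (p := fun x => ζ x = x) (by rw [hS3]; omega)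
    ext x
    rw [Equiv.Perm.one_apply]
    exact hall x
  have hfact : n.factorization 3 ≤ 1 := by
    set sx : {x : Ω // ζ x = x} := ⟨hx0.choose, hx0.choose_spec⟩ with hsx
    have horb_dvd : (MulAction.orbit ↥Q sx).ncard ∣ Nat.card ↥Q := by
      rw [← MulAction.index_stabilizer]
      exact Subgroup.index_dvd_card _
    have horb_le : (MulAction.orbit ↥Q sx).ncard ≤ 3 := by
      have hle := Set.ncard_le_ncard (Set.subset_univ (MulAction.orbit ↥Q sx)) Set.finite_univ
      rw [Set.ncard_univ] at hle
      exact le_trans hle (le_of_eq hS3)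
    have horb_ne1 : (MulAction.orbit ↥Q sx).ncard ≠ 1 := by
      intro h1
      obtain ⟨a, ha⟩ := Set.ncard_eq_one.mp h1
      have hsa : sx ∈ MulAction.orbit ↥Q sx := MulAction.mem_orbit_self sx
      rw [ha, Set.mem_singleton_iff] at hsa
      apply hfpempty.false
      refine ⟨sx, fun g => ?_⟩
      have hg : g • sx ∈ MulAction.orbit ↥Q sx := MulAction.mem_orbit _ g
      rw [ha, Set.mem_singleton_iff] at hg
      rw [hg, hsa]
    have horb3 : (MulAction.orbit ↥Q sx).ncard = 3 := by
      have hd : (MulAction.orbit ↥Q sx).ncard ∣ 3 ^ k := hcardP ▸ horb_dvd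
      obtain ⟨j, _, hje⟩ := (Nat.dvd_prime_pow (by norm_num)).mp hd
      cases j with
      | zero => rw [pow_zero] at hje; exact absurd hje horb_ne1
      | succ i =>
        have h3le : 3 ^ (i + 1) ≤ 3 := hje ▸ horb_le
        have hge : (3 : ℕ) ^ 1 ≤ 3 ^ (i + 1) := Nat.pow_le_pow_right (by norm_num) (by omega)
        rw [pow_one] at hge
        rw [hje]
        omega
    have hstabcard : 3 * Nat.card (MulAction.stabilizer ↥Q sx) = 3 ^ k := by
      have hidx : (MulAction.stabilizer ↥Q sx).index = 3 := by
        rw [MulAction.index_stabilizer]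
        exact horb3
      have h : (MulAction.stabilizer ↥Q sx).index * Nat.card (MulAction.stabilizer ↥Q sx)
          = Nat.card ↥Q := Subgroup.index_mul_card _
      rw [hidx, hcardP] at h
      exact h
    have hstabdvd : 3 ^ (k - 1) ∣ Nat.card (MulAction.stabilizer ↥Q sx) := by
      have hk' : (3 : ℕ) ^ k = 3 * 3 ^ (k - 1) := by
        rw [← pow_succ']
        congr 1
        omega
      have : Nat.card (MulAction.stabilizer ↥Q sx) = 3 ^ (k - 1) := by omega
      exact this ▸ dvd_rfl
    have hmap : 3 ^ (k - 1) ∣ Nat.card (MulAction.stabilizer ↥G hx0.choose) := by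
      have hTle : Subgroup.map Q.subtype (MulAction.stabilizer ↥Q sx) ≤
          MulAction.stabilizer ↥G hx0.choose := by
        rintro _ ⟨u, hu, rfl⟩
        rw [MulAction.mem_stabilizer_iff]
        have h1 : u • sx = sx := hu
        have h2 := congrArg Subtype.val h1
        rw [hsmul_coe] at h2
        exact h2
      have hTcard : Nat.card (Subgroup.map Q.subtype (MulAction.stabilizer ↥Q sx)) =
          Nat.card (MulAction.stabilizer ↥Q sx) :=
        (Nat.card_congr ((Subgroup.equivMapOfInjective _ _
          (Subgroup.subtype_injective Q)).toEquiv)).symm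
      exact (hTcard.symm ▸ hstabdvd).trans (Subgroup.card_dvd_of_le hTle)
    have h3n : 3 ^ (n.factorization 3) ∣ n := Nat.ordProj_dvd n 3
    have hbig : 3 ^ (n.factorization 3 + (k - 1)) ∣ Nat.card ↥G := by
      rw [← horb hx0.choose, pow_add]
      exact Nat.mul_dvd_mul h3n hmap
    have := (hq.pow_dvd_iff_le_factorization hGpos.ne').mp hbig
    omega
  exact ⟨rfl, hfact, hnne3⟩


/-- an elusive group of fixity `f` of odd order satisfies `f ≥ 5`. -/
theorem stmt_8 (G : Subgroup (Equiv.Perm Ω)) (f : ℕ) (hodd : Odd (Nat.card ↥G))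
    (hel : IsElusive G) (hfix : HasFixity G f) :
    5 ≤ f := by
  classical
  by_contra hlt
  push_neg at hlt
  have hf4 : f ≤ 4 := by omega
  obtain ⟨hbound, g0, hg0G, hg0ne, -⟩ := hfix
  have hn2 : 2 ≤ Fintype.card Ω := by
    by_contra h
    push_neg at h
    have hsub : Subsingleton Ω := Fintype.card_le_one_iff_subsingleton.mp (by omega)
    apply hg0ne
    ext x
    exact Subsingleton.elim _ _
  set n := Fintype.card Ω with hn
  obtain ⟨-, -, hne3⟩ := key_lemma G f hodd hel hbound hf4 hn2 n.minFac
    (Nat.minFac_prime (by omega)) (Nat.minFac_dvd n)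
  have hall : ∀ {d : ℕ}, d.Prime → d ∣ n → d = 3 := fun hd hdn =>
    (key_lemma G f hodd hel hbound hf4 hn2 _ hd hdn).1
  have hfact : n.factorization 3 ≤ 1 :=
    (key_lemma G f hodd hel hbound hf4 hn2 3 Nat.prime_three
      (hall (Nat.minFac_prime (by omega : n ≠ 1)) (Nat.minFac_dvd n) ▸ Nat.minFac_dvd n)).2.1
  have hpow : n = 3 ^ n.primeFactorsList.length :=
    Nat.eq_prime_pow_of_unique_prime_dvd (by omega) hall
  set L := n.primeFactorsList.length with hLdef
  rcases (by omega : L = 0 ∨ L = 1 ∨ 2 ≤ L) with h | h | h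
  · rw [h, pow_zero] at hpow
    omega
  · rw [h, pow_one] at hpow
    exact hne3 hpow
  · have hdvd : (3 : ℕ) ^ 2 ∣ n := by
      rw [hpow]
      exact pow_dvd_pow 3 h
    have := (Nat.prime_three.pow_dvd_iff_le_factorization (by omega)).mp hdvd
    omega
end

section
/- Let Ω be a finite set, let G ≤ Sym(Ω) be an elusive permutation group of fixity f, and let H be a non-trivial normal subgroup of G with smallest prime divisor p_H of |H|. Then |Ω| · (p_H − 1) ≤ f · (|H| − 1). -/
variable {Ω : Type*} [Fintype Ω]

/-- for an elusive group `G` of fixity `f` and a non-trivial normal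
subgroup `H` of `G` with smallest prime divisor `p_H` of `|H|`, one has
`|Ω| * (p_H - 1) ≤ f * (|H| - 1)`. -/
theorem stmt_9 (G : Subgroup (Equiv.Perm Ω)) (f : ℕ) (hel : IsElusive G)
    (hfix : HasFixity G f) (H : Subgroup ↥G) (hHnormal : H.Normal) (hHbot : H ≠ ⊥) :
    Fintype.card Ω * ((Nat.card ↥H).minFac - 1) ≤ f * (Nat.card ↥H - 1) := by
  classical
  have hDecEq : DecidableEq Ω := Classical.decEq Ω
  have hGfin : Finite ↥G := inferInstance
  have hHfin : Finite ↥H := inferInstance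
  have _instH : Fintype ↥H := Fintype.ofFinite _
  set π : ↥H →* Equiv.Perm Ω := G.subtype.comp H.subtype with hπ
  have hπinj : Function.Injective π :=
    Subtype.coe_injective.comp Subtype.coe_injective
  have hπmem : ∀ h : ↥H, π h ∈ G := fun h => (h : ↥G).2
  set m := Nat.card ↥H with hm
  set p := m.minFac with hpdef
  -- m > 1
  have hm1 : 1 < m := by
    have : Nontrivial ↥H := by
      rcases H.bot_or_nontrivial with h | h
      · exact absurd h hHbot
      · exact h
    exact Finite.one_lt_card_iff_nontrivial.mpr this
  have hpprime : p.Prime := Nat.minFac_prime (by omega)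
  -- every point has a nontrivial H-stabilizer element
  have claim : ∀ α : Ω, ∃ h : ↥H, h ≠ 1 ∧ π h α = α := by
    by_contra hc
    push_neg at hc
    obtain ⟨α, hα⟩ := hc
    -- Cauchy: element of order p in H
    obtain ⟨x, hx⟩ : ∃ x : ↥H, orderOf x = p := by
      have hdvd : p ∣ Fintype.card ↥H := by
        rw [← Nat.card_eq_fintype_card, ← hm]
        exact Nat.minFac_dvd m
      haveI := Fact.mk hpprime
      exact exists_prime_orderOf_dvd_card p hdvd
    have hx1 : x ≠ 1 := by
      intro h
      rw [h, orderOf_one] at hx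
      exact hpprime.one_lt.ne' hx.symm
    -- π x is fixed-point-free of prime order: contradiction with elusive
    refine hel.2 ⟨π x, hπmem x, ?_, ?_⟩
    · rw [orderOf_injective π hπinj, hx]; exact hpprime
    · intro β hβ
      obtain ⟨k, hkG, hk⟩ := hel.1 α β
      set k' : ↥G := ⟨k, hkG⟩ with hk'
      have hy : k'⁻¹ * (x : ↥G) * k' ∈ H := by
        have := hHnormal.conj_mem (x : ↥G) x.2 k'⁻¹
        rwa [inv_inv] at this
      set y : ↥H := ⟨k'⁻¹ * (x : ↥G) * k', hy⟩ with hydef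
      have hy1 : y ≠ 1 := by
        intro h
        apply hx1
        have : k'⁻¹ * (x : ↥G) * k' = 1 := congrArg Subtype.val h
        have : (x : ↥G) = 1 := by
          have := congrArg (fun z => k' * z * k'⁻¹) this
          simpa [mul_assoc] using this
        exact Subtype.coe_injective this
      have hyfix : π y α = α := by
        have hπy : π y = (k : Equiv.Perm Ω)⁻¹ * π x * k := by
          simp [hπ, hydef, hk']
        rw [hπy, Equiv.Perm.mul_apply, Equiv.Perm.mul_apply, hk, hβ, ← hk,
          Equiv.Perm.coe_inv, Equiv.symm_apply_apply]
      exact hα y hy1 hyfix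
  -- stabilizer cardinality lower bound
  have stabBound : ∀ α : Ω, p ≤ Fintype.card {h : ↥H // π h α = α} := by
    intro α
    set S : Subgroup ↥H :=
      (MulAction.stabilizer (Equiv.Perm Ω) α).comap π with hS
    have hmemS : ∀ h : ↥H, h ∈ S ↔ π h α = α := by
      intro h
      rw [hS, Subgroup.mem_comap, MulAction.mem_stabilizer_iff]
      rfl
    have hcard : Fintype.card {h : ↥H // π h α = α} = Nat.card ↥S := by
      rw [← Nat.card_eq_fintype_card]
      exact Nat.card_congr (Equiv.subtypeEquivRight fun h => (hmemS h).symm)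
    rw [hcard]
    have hSne : 1 < Nat.card ↥S := by
      obtain ⟨h, h1, hfix⟩ := claim α
      have : Nontrivial ↥S :=
        ⟨⟨⟨h, (hmemS h).mpr hfix⟩, 1, by simp [Subtype.ext_iff, h1]⟩⟩
      exact Finite.one_lt_card_iff_nontrivial.mpr this
    have hdvd : Nat.card ↥S ∣ m := Subgroup.card_subgroup_dvd_card S
    have h2 : 2 ≤ (Nat.card ↥S).minFac :=
      (Nat.minFac_prime (by omega)).two_le
    calc p ≤ (Nat.card ↥S).minFac :=
          Nat.minFac_le_of_dvd h2 ((Nat.minFac_dvd _).trans hdvd)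
      _ ≤ Nat.card ↥S := Nat.minFac_le (by omega)
  -- double counting
  have sumEq : ∑ α : Ω, Fintype.card {h : ↥H // π h α = α}
      = ∑ h : ↥H, Fintype.card {β : Ω // π h β = β} := by
    calc ∑ α : Ω, Fintype.card {h : ↥H // π h α = α}
        = ∑ α : Ω, ∑ h : ↥H, if π h α = α then 1 else 0 := by
          refine Finset.sum_congr rfl fun α _ => ?_
          rw [Fintype.card_subtype, Finset.card_filter]
      _ = ∑ h : ↥H, ∑ α : Ω, if π h α = α then 1 else 0 := Finset.sum_comm
      _ = ∑ h : ↥H, Fintype.card {β : Ω // π h β = β} := by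
          refine Finset.sum_congr rfl fun h _ => ?_
          rw [Fintype.card_subtype, Finset.card_filter]
  -- lower bound for the sum
  have lb : Fintype.card Ω * p ≤ ∑ α : Ω, Fintype.card {h : ↥H // π h α = α} := by
    have := Finset.card_nsmul_le_sum Finset.univ
      (fun α => Fintype.card {h : ↥H // π h α = α}) p
      (fun α _ => stabBound α)
    simpa [smul_eq_mul] using this
  -- upper bound for the sum
  have ub : ∑ h : ↥H, Fintype.card {β : Ω // π h β = β}
      ≤ Fintype.card Ω + (m - 1) * f := by
    have hsplit : ∑ h : ↥H, Fintype.card {β : Ω // π h β = β}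
        = Fintype.card {β : Ω // π (1 : ↥H) β = β}
          + ∑ h ∈ Finset.univ.erase (1 : ↥H),
              Fintype.card {β : Ω // π h β = β} := by
      exact (Finset.add_sum_erase _ _ (Finset.mem_univ (1 : ↥H))).symm
    rw [hsplit]
    have h1card : Fintype.card {β : Ω // π (1 : ↥H) β = β} = Fintype.card Ω :=
      Fintype.card_congr (Equiv.subtypeUnivEquiv fun β => by simp)
    rw [h1card]
    have hterm : ∀ h ∈ Finset.univ.erase (1 : ↥H),
        Fintype.card {β : Ω // π h β = β} ≤ f := by
      intro h hh
      have hne : h ≠ 1 := Finset.ne_of_mem_erase hh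
      have hπne : π h ≠ 1 := fun hc => hne (hπinj (by rw [hc, map_one]))
      have := hfix.1 (π h) (hπmem h) hπne
      rwa [fixedCount, Nat.card_eq_fintype_card] at this
    have := Finset.sum_le_card_nsmul (Finset.univ.erase (1 : ↥H))
      (fun h => Fintype.card {β : Ω // π h β = β}) f hterm
    have hcard : (Finset.univ.erase (1 : ↥H)).card = m - 1 := by
      rw [Finset.card_erase_of_mem (Finset.mem_univ _), Finset.card_univ,
        ← Nat.card_eq_fintype_card]
    rw [hcard, smul_eq_mul] at this
    omega
  -- conclude
  have key : Fintype.card Ω * p ≤ Fintype.card Ω + (m - 1) * f :=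
    lb.trans (sumEq ▸ ub)
  have hps : Fintype.card Ω * (p - 1) + Fintype.card Ω = Fintype.card Ω * p := by
    have : p - 1 + 1 = p := Nat.succ_pred_eq_of_pos hpprime.pos
    calc Fintype.card Ω * (p - 1) + Fintype.card Ω
        = Fintype.card Ω * (p - 1 + 1) := by ring
      _ = Fintype.card Ω * p := by rw [this]
  have hcomm : (m - 1) * f = f * (m - 1) := Nat.mul_comm _ _
  omega
end

section
/- Let Ω be a finite set, let G ≤ Sym(Ω) be an elusive permutation group of fixity f, and let N be a non-trivial abelian normal subgroup of G with smallest prime divisor p of |N|. Then |Ω| · (p − 1) ≤ f · (p·f − 1), and consequently |Ω| ≤ f · (2f − 1). -/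
variable {Ω : Type*} [Fintype Ω]

lemma arith1 (p q t f : ℕ) (hp : 2 ≤ p) (hpq : p ≤ q) (ht1 : 1 ≤ t) (htf : t ≤ f) :
    (p - 1) * (q * t - 1) ≤ (p * f - 1) * (q - 1) := by
  have h1 : 1 ≤ q * t := Nat.one_le_iff_ne_zero.2 (Nat.mul_ne_zero (by omega) (by omega))
  have h2 : 1 ≤ p * f := Nat.one_le_iff_ne_zero.2 (Nat.mul_ne_zero (by omega) (by omega))
  zify [h1, h2, show 1 ≤ p by omega, show 1 ≤ q by omega]
  nlinarith [mul_nonneg (by omega : (0:ℤ) ≤ (q:ℤ) - p) (by omega : (0:ℤ) ≤ (t:ℤ) - 1),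
    mul_nonneg (mul_nonneg (by omega : (0:ℤ) ≤ (f:ℤ) - t) (by omega : (0:ℤ) ≤ (q:ℤ) - 1)) (by positivity : (0:ℤ) ≤ (p:ℤ))]

lemma arith2 (p f : ℕ) (hp : 2 ≤ p) : f * (p * f - 1) ≤ f * (2 * f - 1) * (p - 1) := by
  rcases Nat.eq_zero_or_pos f with hf | hf
  · simp [hf]
  have h1 : 1 ≤ p * f := Nat.one_le_iff_ne_zero.2 (Nat.mul_ne_zero (by omega) (by omega))
  zify [h1, show 1 ≤ 2 * f by omega, show 1 ≤ p by omega]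
  nlinarith [mul_nonneg (by omega : (0:ℤ) ≤ (f:ℤ) - 1) (by omega : (0:ℤ) ≤ (p:ℤ) - 2)]

/-- for an elusive group `G` of fixity `f` and a non-trivial abelian
normal subgroup `N` with smallest prime divisor `p` of `|N|`, one has
`|Ω| * (p - 1) ≤ f * (p * f - 1)`, and consequently `|Ω| ≤ f * (2 * f - 1)`. -/
theorem stmt_12 (G : Subgroup (Equiv.Perm Ω)) (f : ℕ) (hel : IsElusive G)
    (hfix : HasFixity G f) (N : Subgroup ↥G) (hNnormal : N.Normal) (hNbot : N ≠ ⊥)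
    (hNab : ∀ a b : ↥N, a * b = b * a) (p : ℕ) (hp : p = (Nat.card ↥N).minFac) :
    Fintype.card Ω * (p - 1) ≤ f * (p * f - 1) ∧
      Fintype.card Ω ≤ f * (2 * f - 1) := by
  classical
  obtain ⟨htrans, hnofpf⟩ := hel
  push_neg at hnofpf
  -- basic facts about p
  have hcardN : 1 < Nat.card ↥N := (Subgroup.one_lt_card_iff_ne_bot N).2 hNbot
  have hpp : p.Prime := hp ▸ Nat.minFac_prime (by omega)
  have hp2 : 2 ≤ p := hpp.two_le
  -- trivial when Ω is empty
  rcases isEmpty_or_nonempty Ω with hΩ | hΩ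
  · simp [Fintype.card_eq_zero]
  set n := Fintype.card Ω with hn
  -- the image of N in Perm Ω
  set N' : Subgroup (Equiv.Perm Ω) := N.map G.subtype with hN'
  have hN'G : N' ≤ G := Subgroup.map_subtype_le N
  have hcomm : ∀ a ∈ N', ∀ b ∈ N', a * b = b * a := by
    rintro a ⟨a₀, ha₀, rfl⟩ b ⟨b₀, hb₀, rfl⟩
    have h := hNab ⟨a₀, ha₀⟩ ⟨b₀, hb₀⟩
    have h2 : a₀ * b₀ = b₀ * a₀ := congrArg Subtype.val h
    simpa [map_mul] using congrArg G.subtype h2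
  have hconjN' : ∀ g ∈ G, ∀ h ∈ N', g * h * g⁻¹ ∈ N' := by
    rintro g hg h ⟨h₀, h₀N, rfl⟩
    have := hNnormal.conj_mem h₀ h₀N ⟨g, hg⟩
    exact ⟨_, this, by simp [map_mul]⟩
  have hcardN' : Nat.card ↥N' = Nat.card ↥N :=
    (Nat.card_congr (N.equivMapOfInjective G.subtype G.subtype_injective).toEquiv).symm
  have hpdvdN' : p ∣ Nat.card ↥N' := by
    rw [hcardN', hp]; exact Nat.minFac_dvd _
  -- the subgroup P of elements of N' with h ^ p = 1
  set P : Subgroup (Equiv.Perm Ω) :=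
    { carrier := {h | h ∈ N' ∧ h ^ p = 1}
      one_mem' := ⟨N'.one_mem, one_pow p⟩
      mul_mem' := by
        rintro a b ⟨haN, hap⟩ ⟨hbN, hbp⟩
        refine ⟨N'.mul_mem haN hbN, ?_⟩
        rw [(Commute.mul_pow (hcomm a haN b hbN)), hap, hbp, one_mul]
      inv_mem' := by
        rintro a ⟨haN, hap⟩
        exact ⟨N'.inv_mem haN, by rw [inv_pow, hap, inv_one]⟩ } with hPdef
  have hPmem : ∀ h, h ∈ P ↔ h ∈ N' ∧ h ^ p = 1 := fun h => Iff.rfl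
  have hPG : ∀ h ∈ P, h ∈ G := fun h hh => hN'G ((hPmem h).1 hh).1
  have hPconj : ∀ g ∈ G, ∀ h ∈ P, g * h * g⁻¹ ∈ P := by
    intro g hg h hh
    obtain ⟨hN, hp1⟩ := (hPmem h).1 hh
    exact (hPmem _).2 ⟨hconjN' g hg h hN, by rw [conj_pow, hp1, mul_one, mul_inv_cancel]⟩
  -- an element of order p in P (Cauchy)
  haveI : Fact p.Prime := ⟨hpp⟩
  obtain ⟨n₀, hn₀⟩ := exists_prime_orderOf_dvd_card (G := ↥N') p
    (by rwa [Fintype.card_eq_nat_card])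
  have horder₁ : orderOf (n₀ : Equiv.Perm Ω) = p := by
    rw [← hn₀]; exact orderOf_injective N'.subtype N'.subtype_injective n₀
  have h₁P : (n₀ : Equiv.Perm Ω) ∈ P :=
    (hPmem _).2 ⟨n₀.2, by rw [← horder₁]; exact pow_orderOf_eq_one _⟩
  have h₁ne : (n₀ : Equiv.Perm Ω) ≠ 1 := by
    intro h; rw [h, orderOf_one] at horder₁; omega
  -- it has a fixed point
  obtain ⟨y, hy⟩ := hnofpf _ (hPG _ h₁P) (horder₁ ▸ hpp)
  -- move the fixed point to the base point x₀
  obtain ⟨x₀⟩ := hΩ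
  obtain ⟨g₀, hg₀G, hg₀⟩ := htrans y x₀
  set h₂ : Equiv.Perm Ω := g₀ * (n₀ : Equiv.Perm Ω) * g₀⁻¹ with hh₂
  have h₂P : h₂ ∈ P := hPconj g₀ hg₀G _ h₁P
  have h₂ne : h₂ ≠ 1 := by
    intro h
    apply h₁ne
    have h' : g₀ * (n₀ : Equiv.Perm Ω) * g₀⁻¹ = 1 := by rw [← hh₂, h]
    calc (n₀ : Equiv.Perm Ω) = g₀⁻¹ * (g₀ * (n₀ : Equiv.Perm Ω) * g₀⁻¹) * g₀ := by group
      _ = g₀⁻¹ * 1 * g₀ := by rw [h']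
      _ = 1 := by group
  have horder₂ : orderOf h₂ = p := by
    refine orderOf_eq_prime ?_ h₂ne
    exact ((hPmem _).1 h₂P).2
  have h₂x₀ : h₂ x₀ = x₀ := by
    have hgy : g₀⁻¹ x₀ = y := by rw [← hg₀]; simp
    simp [hh₂, Equiv.Perm.mul_apply, hgy, hy, hg₀]
  -- finsets
  set PF : Finset (Equiv.Perm Ω) := Finset.univ.filter (· ∈ P) with hPF
  set Stab : Ω → Finset (Equiv.Perm Ω) :=
    fun x => Finset.univ.filter (fun h => h ∈ P ∧ h x = x) with hStab
  set FixF : Equiv.Perm Ω → Finset Ω :=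
    fun h => Finset.univ.filter (fun x => h x = x) with hFixF
  have hfc : ∀ h : Equiv.Perm Ω, fixedCount h = (FixF h).card := by
    intro h
    rw [fixedCount, Nat.card_eq_fintype_card, Fintype.card_subtype]
  set q : ℕ := (Stab x₀).card with hq
  set t : ℕ := (PF.image (fun h => h x₀)).card with ht
  set R : ℕ := PF.card with hR
  have h1Stab : ∀ x, (1 : Equiv.Perm Ω) ∈ Stab x := by
    intro x; simp [hStab, P.one_mem]
  have h1PF : (1 : Equiv.Perm Ω) ∈ PF := by simp [hPF, P.one_mem]
  -- the stabilizer cardinality is constant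
  have hqconst : ∀ x, (Stab x).card = q := by
    have key : ∀ g ∈ G, ∀ x, (Stab x).card = (Stab (g x)).card := by
      intro g hg x
      refine Finset.card_bij' (fun h _ => g * h * g⁻¹) (fun h _ => g⁻¹ * h * g) ?_ ?_ ?_ ?_
      · intro a ha
        simp only [hStab, Finset.mem_filter, Finset.mem_univ, true_and] at ha ⊢
        exact ⟨hPconj g hg a ha.1, by simp [Equiv.Perm.mul_apply, ha.2]⟩
      · intro a ha
        simp only [hStab, Finset.mem_filter, Finset.mem_univ, true_and] at ha ⊢
        constructor
        · have := hPconj g⁻¹ (G.inv_mem hg) a ha.1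
          simpa using this
        · simp [Equiv.Perm.mul_apply, ha.2]
      · intro a _; group
      · intro a _; group
    intro x
    obtain ⟨g, hgG, hgx⟩ := htrans x x₀
    rw [hq, ← hgx]
    exact key g hgG x
  -- orbit-stabilizer: R = q * t
  have hRqt : R = q * t := by
    rw [hR, Finset.card_eq_sum_card_image (fun h => h x₀) PF]
    have hfiber : ∀ b ∈ PF.image (fun h => h x₀),
        (PF.filter (fun h => h x₀ = b)).card = q := by
      intro b hb
      obtain ⟨h₀, h₀PF, h₀b⟩ := Finset.mem_image.1 hb
      have h₀P : h₀ ∈ P := by simpa [hPF] using h₀PF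
      refine Finset.card_bij' (fun h _ => h₀⁻¹ * h) (fun h _ => h₀ * h) ?_ ?_ ?_ ?_
      · intro a ha
        simp only [hPF, hStab, Finset.mem_filter, Finset.mem_univ, true_and] at ha ⊢
        refine ⟨P.mul_mem (P.inv_mem h₀P) ha.1, ?_⟩
        rw [Equiv.Perm.mul_apply, ha.2, ← h₀b]
        simp
      · intro a ha
        simp only [hPF, hStab, Finset.mem_filter, Finset.mem_univ, true_and] at ha ⊢
        exact ⟨P.mul_mem h₀P ha.1, by rw [Equiv.Perm.mul_apply, ha.2, h₀b]⟩
      · intro a _; group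
      · intro a _; group
    rw [Finset.sum_congr rfl hfiber, Finset.sum_const, smul_eq_mul, ht, Nat.mul_comm]
  -- double counting
  have hcount : n * (q - 1) ≤ (R - 1) * f := by
    have e1 : ∀ x : Ω, (Stab x).erase 1 = (PF.erase 1).filter (fun h => h x = x) := by
      intro x
      ext h
      simp only [hStab, hPF, Finset.mem_erase, Finset.mem_filter, Finset.mem_univ, true_and]
      tauto
    have e2 : (∑ h ∈ PF.erase 1, (FixF h).card) = ∑ x : Ω, ((Stab x).erase 1).card := by
      have : ∀ h ∈ PF.erase 1, (FixF h).card = ∑ x : Ω, if h x = x then 1 else 0 := by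
        intro h _
        rw [hFixF]; exact Finset.card_filter _ _
      rw [Finset.sum_congr rfl this, Finset.sum_comm]
      refine Finset.sum_congr rfl fun x _ => ?_
      rw [e1 x, Finset.card_filter]
    have e3 : (∑ x : Ω, ((Stab x).erase 1).card) = n * (q - 1) := by
      have : ∀ x : Ω, ((Stab x).erase 1).card = q - 1 := by
        intro x
        rw [Finset.card_erase_of_mem (h1Stab x), hqconst x]
      rw [Finset.sum_congr rfl fun x _ => this x, Finset.sum_const, smul_eq_mul,
        Finset.card_univ]
    have e4 : (∑ h ∈ PF.erase 1, (FixF h).card) ≤ (R - 1) * f := by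
      calc (∑ h ∈ PF.erase 1, (FixF h).card) ≤ ∑ _h ∈ PF.erase 1, f := by
            refine Finset.sum_le_sum fun h hh => ?_
            obtain ⟨hne, hhPF⟩ := Finset.mem_erase.1 hh
            have hhP : h ∈ P := by simpa [hPF] using hhPF
            rw [← hfc h]
            exact hfix.1 h (hPG h hhP) hne
        _ = (R - 1) * f := by
            rw [Finset.sum_const, smul_eq_mul, Finset.card_erase_of_mem h1PF, hR]
    rw [← e3, ← e2]; exact e4
  -- p ≤ q
  have hpq : p ≤ q := by
    set Qx : Subgroup (Equiv.Perm Ω) := P ⊓ MulAction.stabilizer (Equiv.Perm Ω) x₀ with hQx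
    have hmemQx : ∀ h : Equiv.Perm Ω, h ∈ Qx ↔ h ∈ P ∧ h x₀ = x₀ := by
      intro h
      rw [hQx, Subgroup.mem_inf, MulAction.mem_stabilizer_iff]
      rfl
    have hqQ : q = Nat.card ↥Qx := by
      rw [Nat.card_eq_fintype_card, Fintype.card_subtype, hq, hStab]
      congr 1
      ext h
      simp [hmemQx]
    have h₂Qx : h₂ ∈ Qx := (hmemQx h₂).2 ⟨h₂P, h₂x₀⟩
    have hdvd : p ∣ Nat.card ↥Qx := by
      have hord : orderOf (⟨h₂, h₂Qx⟩ : ↥Qx) = p := by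
        rw [← horder₂]
        exact (orderOf_injective Qx.subtype Qx.subtype_injective ⟨h₂, h₂Qx⟩).symm
      exact hord ▸ orderOf_dvd_natCard (⟨h₂, h₂Qx⟩ : ↥Qx)
    have hqpos : 0 < q := Finset.card_pos.2 ⟨1, h1Stab x₀⟩
    rw [hqQ]
    exact Nat.le_of_dvd (hqQ ▸ hqpos) hdvd
  -- 1 ≤ t
  have ht1 : 1 ≤ t := by
    rw [ht]
    exact Finset.card_pos.2 ⟨(1 : Equiv.Perm Ω) x₀, Finset.mem_image_of_mem _ h1PF⟩
  -- t ≤ f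
  have htf : t ≤ f := by
    have hsub : PF.image (fun h => h x₀) ⊆ FixF h₂ := by
      intro b hb
      obtain ⟨h, hhPF, rfl⟩ := Finset.mem_image.1 hb
      have hhP : h ∈ P := by simpa [hPF] using hhPF
      have hc : h₂ * h = h * h₂ :=
        hcomm h₂ ((hPmem _).1 h₂P).1 h ((hPmem _).1 hhP).1
      have : h₂ (h x₀) = h (h₂ x₀) := by
        rw [← Equiv.Perm.mul_apply, hc, Equiv.Perm.mul_apply]
      simp only [hFixF, Finset.mem_filter, Finset.mem_univ, true_and]
      rw [this, h₂x₀]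
    calc t ≤ (FixF h₂).card := Finset.card_le_card hsub
      _ = fixedCount h₂ := (hfc h₂).symm
      _ ≤ f := hfix.1 h₂ (hPG h₂ h₂P) h₂ne
  -- final arithmetic
  have hq1 : 1 ≤ q - 1 := by omega
  have first : n * (p - 1) ≤ f * (p * f - 1) := by
    have H : (n * (p - 1)) * (q - 1) ≤ (f * (p * f - 1)) * (q - 1) := by
      calc (n * (p - 1)) * (q - 1) = (n * (q - 1)) * (p - 1) := by ring
        _ ≤ ((R - 1) * f) * (p - 1) := Nat.mul_le_mul_right _ hcount
        _ = f * ((p - 1) * (q * t - 1)) := by rw [hRqt]; ring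
        _ ≤ f * ((p * f - 1) * (q - 1)) :=
            Nat.mul_le_mul_left _ (arith1 p q t f hp2 hpq ht1 htf)
        _ = (f * (p * f - 1)) * (q - 1) := by ring
    exact Nat.le_of_mul_le_mul_right H (by omega)
  refine ⟨first, ?_⟩
  have H2 : n * (p - 1) ≤ (f * (2 * f - 1)) * (p - 1) :=
    le_trans first (arith2 p f hp2)
  exact Nat.le_of_mul_le_mul_right H2 (by omega)
end

section
/- Let Ω be a finite set and let G ≤ Sym(Ω) be a 2-closed elusive solvable permutation group of fixity f. Then f ≥ 6. -/
variable {Ω : Type*} [Fintype Ω]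

/-- `G` is 2-closed: any permutation `σ` of `Ω` such that `(σ α, σ β)` lies in the
`G`-orbit of `(α, β)` for all `α, β` belongs to `G`. -/
def IsTwoClosed (G : Subgroup (Equiv.Perm Ω)) : Prop :=
  ∀ σ : Equiv.Perm Ω, (∀ α β : Ω, ∃ g ∈ G, g α = σ α ∧ g β = σ β) → σ ∈ G

section Stmt13AuxSection
set_option linter.unusedSectionVars false
set_option maxHeartbeats 1000000
open MulAction Equiv

namespace Stmt13Aux

private lemma orbit_eq_of_mem (N : Subgroup (Perm Ω)) {y z : Ω}
    (hz : z ∈ orbit ↥N y) : orbit ↥N z = orbit ↥N y := by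
  obtain ⟨n, rfl⟩ := hz
  exact orbit_smul n y

private lemma mem_stab_iff (N : Subgroup (Perm Ω)) (n : ↥N) (y : Ω) :
    n ∈ stabilizer ↥N y ↔ (n : Perm Ω) y = y := Iff.rfl

private lemma Kcomm (N : Subgroup (Perm Ω)) (hcomm : ∀ a ∈ N, ∀ b ∈ N, a * b = b * a) :
    ∀ a b : ↥N, a * b = b * a := fun a b => Subtype.ext (hcomm a a.2 b b.2)

private lemma mem_mul_of_sup {K : Type*} [Group K] (hc : ∀ a b : K, a * b = b * a)
    (H T : Subgroup K) {x : K} (hx : x ∈ H ⊔ T) : ∃ a ∈ H, ∃ b ∈ T, a * b = x := by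
  haveI : T.Normal := ⟨fun t ht g => by
    have : g * t * g⁻¹ = t := by rw [hc g t, mul_assoc, mul_inv_cancel, mul_one]
    rwa [this]⟩
  have hset := Subgroup.mul_normal H T
  have hx' : x ∈ (↑(H ⊔ T) : Set K) := hx
  rw [hset] at hx'
  exact Set.mem_mul.mp hx'

private lemma apply_comm (N : Subgroup (Perm Ω)) (hcomm : ∀ a ∈ N, ∀ b ∈ N, a * b = b * a)
    (m n : ↥N) (y : Ω) :
    (m : Perm Ω) ((n : Perm Ω) y) = (n : Perm Ω) ((m : Perm Ω) y) := by
  have h := hcomm (m : Perm Ω) m.2 (n : Perm Ω) n.2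
  calc (m : Perm Ω) ((n : Perm Ω) y) = ((m : Perm Ω) * (n : Perm Ω)) y := rfl
    _ = ((n : Perm Ω) * (m : Perm Ω)) y := by rw [h]
    _ = _ := rfl

private lemma stab_eq_of_mem_orbit (N : Subgroup (Perm Ω))
    (hcomm : ∀ a ∈ N, ∀ b ∈ N, a * b = b * a) {y z : Ω}
    (hz : z ∈ orbit ↥N y) : stabilizer ↥N z = stabilizer ↥N y := by
  obtain ⟨n, rfl⟩ := hz
  ext m
  constructor
  · intro hm
    have h2 : (m : Perm Ω) ((n : Perm Ω) y) = (n : Perm Ω) y := hm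
    rw [apply_comm N hcomm m n y] at h2
    exact (EmbeddingLike.apply_eq_iff_eq (n : Perm Ω)).mp h2
  · intro hm
    show (m : Perm Ω) ((n : Perm Ω) y) = (n : Perm Ω) y
    rw [apply_comm N hcomm m n y, show (m : Perm Ω) y = y from hm]

private lemma exists_move (G N : Subgroup (Perm Ω)) (hNG : N ≤ G)
    (hconj : ∀ g ∈ G, ∀ a ∈ N, g * a * g⁻¹ ∈ N)
    (htr : ∀ α β : Ω, ∃ g ∈ G, g α = β)
    (ha : ∃ a ∈ N, a ≠ (1 : Perm Ω)) (y : Ω) :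
    ∃ n : ↥N, (n : Perm Ω) y ≠ y := by
  obtain ⟨a, haN, hane⟩ := ha
  have : ∃ β : Ω, a β ≠ β := by
    by_contra h
    push_neg at h
    exact hane (Equiv.ext h)
  obtain ⟨β, hβ⟩ := this
  obtain ⟨g, hgG, hgβ⟩ := htr β y
  refine ⟨⟨g * a * g⁻¹, hconj g hgG a haN⟩, ?_⟩
  have hginv : g⁻¹ y = β := by
    apply g.injective
    rw [hgβ]
    exact Equiv.apply_symm_apply g y
  show (g * a * g⁻¹) y ≠ y
  rw [Equiv.Perm.mul_apply, Equiv.Perm.mul_apply, hginv]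
  intro h
  exact hβ (g.injective (by rw [h, hgβ]))

open scoped Classical in
private noncomputable def pick {K : Type*} [Group K] (S : Subgroup K) : K :=
  if h : ∃ n : K, n ∉ S then h.choose else 1

private lemma pick_spec {K : Type*} [Group K] (S : Subgroup K) (h : ∃ n : K, n ∉ S) :
    pick S ∉ S := by
  rw [pick, dif_pos h]
  exact h.choose_spec

private lemma caseI (G N : Subgroup (Perm Ω)) (p : ℕ) (hp : p.Prime) (hNG : N ≤ G)
    (ha : ∃ a ∈ N, a ≠ (1 : Perm Ω))
    (hcomm : ∀ a ∈ N, ∀ b ∈ N, a * b = b * a)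
    (hconj : ∀ g ∈ G, ∀ a ∈ N, g * a * g⁻¹ ∈ N)
    (hpow : ∀ a ∈ N, a ^ p = 1)
    (h2c : ∀ σ : Perm Ω, (∀ α β : Ω, ∃ g ∈ G, g α = σ α ∧ g β = σ β) → σ ∈ G)
    (htr : ∀ α β : Ω, ∃ g ∈ G, g α = β)
    (hnofpf : ¬∃ g ∈ G, (orderOf g).Prime ∧ ∀ x : Ω, g x ≠ x)
    (hP : ∀ y z : Ω, stabilizer ↥N y = stabilizer ↥N z ∨
      stabilizer ↥N y ⊔ stabilizer ↥N z = ⊤) : False := by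
  classical
  have hprop : ∀ y : Ω, ∃ n : ↥N, n ∉ stabilizer ↥N y := by
    intro y
    obtain ⟨n, hn⟩ := exists_move G N hNG hconj htr ha y
    exact ⟨n, fun h => hn h⟩
  have hpick : ∀ y : Ω, pick (stabilizer ↥N y) ∉ stabilizer ↥N y :=
    fun y => pick_spec _ (hprop y)
  set σfun : Ω → Ω := fun y => ((pick (stabilizer ↥N y) : ↥N) : Perm Ω) y with hσfun
  have hmem_orbit : ∀ y : Ω, σfun y ∈ orbit ↥N y := fun y => ⟨pick (stabilizer ↥N y), rfl⟩
  have hsσ : ∀ y : Ω, stabilizer ↥N (σfun y) = stabilizer ↥N y :=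
    fun y => stab_eq_of_mem_orbit N hcomm (hmem_orbit y)
  have hinj : Function.Injective σfun := by
    intro y₁ y₂ h
    have h' : ((pick (stabilizer ↥N y₁) : ↥N) : Perm Ω) y₁
        = ((pick (stabilizer ↥N y₂) : ↥N) : Perm Ω) y₂ := h
    have hy2 : y₂ ∈ orbit ↥N y₁ := by
      refine ⟨(pick (stabilizer ↥N y₂))⁻¹ * pick (stabilizer ↥N y₁), ?_⟩
      show (((pick (stabilizer ↥N y₂))⁻¹ * pick (stabilizer ↥N y₁) : ↥N) : Perm Ω) y₁ = y₂
      have hc : (((pick (stabilizer ↥N y₂))⁻¹ * pick (stabilizer ↥N y₁) : ↥N) : Perm Ω)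
          = ((pick (stabilizer ↥N y₂) : ↥N) : Perm Ω)⁻¹
            * ((pick (stabilizer ↥N y₁) : ↥N) : Perm Ω) := by push_cast; rfl
      rw [hc, Equiv.Perm.mul_apply, h']
      exact Equiv.symm_apply_apply _ _
    have hseq : stabilizer ↥N y₂ = stabilizer ↥N y₁ := stab_eq_of_mem_orbit N hcomm hy2
    rw [hseq] at h'
    exact ((pick (stabilizer ↥N y₁) : ↥N) : Perm Ω).injective h'
  have hbij : Function.Bijective σfun := Finite.injective_iff_bijective.mp hinj
  set σ : Perm Ω := Equiv.ofBijective σfun hbij with hσdef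
  have hσapp : ∀ y : Ω, σ y = ((pick (stabilizer ↥N y) : ↥N) : Perm Ω) y := fun y => rfl
  have hσG : σ ∈ G := by
    apply h2c
    intro α β
    rcases hP α β with hEq | hSup
    · refine ⟨((pick (stabilizer ↥N α) : ↥N) : Perm Ω), hNG (pick (stabilizer ↥N α)).2, rfl, ?_⟩
      rw [hσapp β, hEq]
    · have hx : (pick (stabilizer ↥N α))⁻¹ * pick (stabilizer ↥N β)
          ∈ stabilizer ↥N α ⊔ stabilizer ↥N β := by
        rw [hSup]; exact Subgroup.mem_top _
      obtain ⟨a, haS, b, hbS, hab⟩ := mem_mul_of_sup (Kcomm N hcomm) _ _ hx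
      have hkey : pick (stabilizer ↥N α) * a = pick (stabilizer ↥N β) * b⁻¹ := by
        have h1 : pick (stabilizer ↥N α) * (a * b) = pick (stabilizer ↥N β) := by
          rw [hab]; group
        rw [← h1]; group
      refine ⟨((pick (stabilizer ↥N α) * a : ↥N) : Perm Ω), hNG (pick (stabilizer ↥N α) * a).2,
        ?_, ?_⟩
      · have hca : ((pick (stabilizer ↥N α) * a : ↥N) : Perm Ω)
            = ((pick (stabilizer ↥N α) : ↥N) : Perm Ω) * ((a : ↥N) : Perm Ω) := rfl
        rw [hca, Equiv.Perm.mul_apply, show ((a : ↥N) : Perm Ω) α = α from haS, hσapp α]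
      · rw [show (pick (stabilizer ↥N α) * a : ↥N) = pick (stabilizer ↥N β) * b⁻¹ from hkey]
        have hcb : ((pick (stabilizer ↥N β) * b⁻¹ : ↥N) : Perm Ω)
            = ((pick (stabilizer ↥N β) : ↥N) : Perm Ω) * (((b : ↥N) : Perm Ω))⁻¹ := by
          push_cast; rfl
        rw [hcb, Equiv.Perm.mul_apply]
        have hbβ : (((b : ↥N) : Perm Ω))⁻¹ β = β := by
          apply ((b : ↥N) : Perm Ω).injective
          rw [show ∀ x, ((b : ↥N) : Perm Ω) ((((b : ↥N) : Perm Ω))⁻¹ x) = x from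
            fun x => Equiv.apply_symm_apply _ x, show ((b : ↥N) : Perm Ω) β = β from hbS]
        rw [hbβ, hσapp β]
  have hpowk : ∀ (k : ℕ) (y : Ω), (σ ^ k) y
      = (((pick (stabilizer ↥N y) : ↥N) : Perm Ω) ^ k) y := by
    intro k
    induction k with
    | zero => intro y; simp
    | succ k ih =>
      intro y
      rw [pow_succ, Equiv.Perm.mul_apply, pow_succ, Equiv.Perm.mul_apply]
      have h1 : (σ ^ k) (σ y) = (((pick (stabilizer ↥N (σ y)) : ↥N) : Perm Ω) ^ k) (σ y) :=
        ih (σ y)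
      rw [h1, show stabilizer ↥N (σ y) = stabilizer ↥N y from hsσ y, hσapp y]
  have hσp : σ ^ p = 1 := by
    ext y
    rw [hpowk p y, show ((pick (stabilizer ↥N y) : ↥N) : Perm Ω) ^ p = 1 from
      hpow _ (pick (stabilizer ↥N y)).2]
  have hfpf : ∀ x : Ω, σ x ≠ x := by
    intro x hx
    exact hpick x (show ((pick (stabilizer ↥N x) : ↥N) : Perm Ω) x = x from hx)
  obtain ⟨a0, ha0N, ha0ne⟩ := ha
  have hΩ : Nonempty Ω := by
    by_contra hempty
    exact ha0ne (Equiv.ext fun x => absurd (Nonempty.intro x) hempty)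
  obtain ⟨x0⟩ := hΩ
  have hσne : σ ≠ 1 := fun hone => hfpf x0 (by rw [hone]; rfl)
  haveI : Fact p.Prime := ⟨hp⟩
  have hord : orderOf σ = p := orderOf_eq_prime hσp hσne
  exact hnofpf ⟨σ, hσG, by rw [hord]; exact hp, hfpf⟩

private lemma orbit_subset_fixed (N : Subgroup (Perm Ω))
    (hcomm : ∀ a ∈ N, ∀ b ∈ N, a * b = b * a) {n : ↥N} {y : Ω}
    (hn : n ∈ stabilizer ↥N y) :
    orbit ↥N y ⊆ {x : Ω | (n : Perm Ω) x = x} := by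
  rintro z ⟨m, rfl⟩
  show (n : Perm Ω) ((m : Perm Ω) y) = (m : Perm Ω) y
  rw [apply_comm N hcomm n m y, show (n : Perm Ω) y = y from hn]

private lemma fixedCount_eq_ncard (n : Perm Ω) :
    fixedCount n = ({x | n x = x} : Set Ω).ncard := by
  rw [← Nat.card_coe_set_eq]
  rfl

private lemma orbit_card_le_fixedCount (N : Subgroup (Perm Ω))
    (hcomm : ∀ a ∈ N, ∀ b ∈ N, a * b = b * a) {n : ↥N} {y : Ω}
    (hn : n ∈ stabilizer ↥N y) :
    Nat.card (orbit ↥N y) ≤ fixedCount (n : Perm Ω) := by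
  rw [fixedCount_eq_ncard, Nat.card_coe_set_eq]
  exact Set.ncard_le_ncard (orbit_subset_fixed N hcomm hn) (Set.toFinite _)

private lemma two_orbit_card_le (N : Subgroup (Perm Ω))
    (hcomm : ∀ a ∈ N, ∀ b ∈ N, a * b = b * a) {n : ↥N} {y z : Ω}
    (hy : n ∈ stabilizer ↥N y) (hz : n ∈ stabilizer ↥N z)
    (hyz : orbit ↥N y ≠ orbit ↥N z) :
    Nat.card (orbit ↥N y) + Nat.card (orbit ↥N z) ≤ fixedCount (n : Perm Ω) := by
  have hdisj : Disjoint (orbit ↥N y) (orbit ↥N z) := by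
    rw [Set.disjoint_left]
    intro u huy huz
    exact hyz ((orbit_eq_of_mem N huy).symm.trans (orbit_eq_of_mem N huz))
  rw [fixedCount_eq_ncard]
  have h1 : orbit ↥N y ∪ orbit ↥N z ⊆ {x : Ω | (n : Perm Ω) x = x} :=
    Set.union_subset (orbit_subset_fixed N hcomm hy) (orbit_subset_fixed N hcomm hz)
  calc Nat.card (orbit ↥N y) + Nat.card (orbit ↥N z)
      = (orbit ↥N y).ncard + (orbit ↥N z).ncard := by
        rw [Nat.card_coe_set_eq, Nat.card_coe_set_eq]
    _ = (orbit ↥N y ∪ orbit ↥N z).ncard :=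
        (Set.ncard_union_eq hdisj (Set.toFinite _) (Set.toFinite _)).symm
    _ ≤ _ := Set.ncard_le_ncard h1 (Set.toFinite _)

private lemma orbit_stab_card (N : Subgroup (Perm Ω)) (y : Ω) :
    Nat.card (orbit ↥N y) * Nat.card (stabilizer ↥N y) = Nat.card ↥N := by
  classical
  have : Fintype ↥N := Fintype.ofFinite _
  have : Fintype (orbit ↥N y) := Fintype.ofFinite _
  have : Fintype (stabilizer ↥N y) := Fintype.ofFinite _
  simp only [Nat.card_eq_fintype_card]
  exact MulAction.card_orbit_mul_card_stabilizer_eq_card_group ↥N y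

private lemma card_stab_eq (G N : Subgroup (Perm Ω)) (hNG : N ≤ G)
    (hconj : ∀ g ∈ G, ∀ a ∈ N, g * a * g⁻¹ ∈ N)
    (htr : ∀ α β : Ω, ∃ g ∈ G, g α = β) (y z : Ω) :
    Nat.card (stabilizer ↥N y) = Nat.card (stabilizer ↥N z) := by
  obtain ⟨g, hgG, hgy⟩ := htr y z
  have hginv : ∀ u v : Ω, g u = v → g⁻¹ v = u := by
    intro u v h
    apply g.injective
    rw [show g (g⁻¹ v) = v from Equiv.apply_symm_apply g v, h]
  refine Nat.card_eq_of_bijective (fun m =>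
    ⟨⟨g * ((m : ↥N) : Perm Ω) * g⁻¹, hconj g hgG _ (m : ↥N).2⟩, ?_⟩) ⟨?_, ?_⟩
  · show (g * ((m : ↥N) : Perm Ω) * g⁻¹) z = z
    rw [Equiv.Perm.mul_apply, Equiv.Perm.mul_apply, hginv y z hgy,
      show ((m : ↥N) : Perm Ω) y = y from m.2, hgy]
  · intro m m' h
    have h2 : g * ((m : ↥N) : Perm Ω) * g⁻¹ = g * ((m' : ↥N) : Perm Ω) * g⁻¹ := by
      exact congrArg (fun t => (((t : ↥N) : Perm Ω)) ) (congrArg Subtype.val h)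
    exact Subtype.ext (Subtype.ext (mul_left_cancel (mul_right_cancel h2)))
  · rintro ⟨m', hm'⟩
    have hmem : g⁻¹ * ((m' : ↥N) : Perm Ω) * g⁻¹⁻¹ ∈ N := hconj g⁻¹ (inv_mem hgG) _ m'.2
    have hstab : (⟨g⁻¹ * ((m' : ↥N) : Perm Ω) * g⁻¹⁻¹, hmem⟩ : ↥N) ∈ stabilizer ↥N y := by
      show (g⁻¹ * ((m' : ↥N) : Perm Ω) * g⁻¹⁻¹) y = y
      rw [inv_inv, Equiv.Perm.mul_apply, Equiv.Perm.mul_apply, hgy,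
        show ((m' : ↥N) : Perm Ω) z = z from hm', hginv y z hgy]
    refine ⟨⟨_, hstab⟩, ?_⟩
    apply Subtype.ext; apply Subtype.ext
    show g * (g⁻¹ * ((m' : ↥N) : Perm Ω) * g⁻¹⁻¹) * g⁻¹ = ((m' : ↥N) : Perm Ω)
    group

open commutatorElement in
private lemma exists_abelian (G : Subgroup (Perm Ω)) (hsol : IsSolvable ↥G)
    (hnt : ∃ g ∈ G, g ≠ (1 : Perm Ω)) :
    ∃ A : Subgroup (Perm Ω), A ≤ G ∧ (∃ a ∈ A, a ≠ (1 : Perm Ω)) ∧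
      (∀ a ∈ A, ∀ b ∈ A, a * b = b * a) ∧
      (∀ g ∈ G, ∀ a ∈ A, g * a * g⁻¹ ∈ A) := by
  obtain ⟨m, hm⟩ := hsol.solvable
  have hex : ∃ k, derivedSeries ↥G k = ⊥ := ⟨m, hm⟩
  classical
  set n := Nat.find hex with hn
  have hbot : derivedSeries ↥G n = ⊥ := Nat.find_spec hex
  have hn0 : n ≠ 0 := by
    intro h0
    obtain ⟨g, hgG, hgne⟩ := hnt
    have : (⟨g, hgG⟩ : ↥G) ∈ derivedSeries ↥G 0 := Subgroup.mem_top _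
    rw [← h0, hbot, Subgroup.mem_bot] at this
    exact hgne (congrArg Subtype.val this)
  set A₀ := derivedSeries ↥G (n - 1) with hA₀
  have hA₀ne : A₀ ≠ ⊥ := Nat.find_min hex (by omega)
  have hcommbot : ⁅A₀, A₀⁆ = ⊥ := by
    have : n - 1 + 1 = n := by omega
    rw [hA₀, ← derivedSeries_succ, this, hbot]
  refine ⟨A₀.map G.subtype, Subgroup.map_subtype_le A₀, ?_, ?_, ?_⟩
  · have : ∃ a : ↥G, a ∈ A₀ ∧ a ≠ 1 := by
      by_contra h
      push_neg at h
      exact hA₀ne (Subgroup.eq_bot_iff_forall _ |>.mpr h)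
    obtain ⟨a, haA, hane⟩ := this
    refine ⟨(a : Perm Ω), ⟨a, haA, rfl⟩, ?_⟩
    intro h
    exact hane (Subtype.ext h)
  · rintro a ⟨a₀, ha₀, rfl⟩ b ⟨b₀, hb₀, rfl⟩
    have : ⁅a₀, b₀⁆ = 1 := by
      have := Subgroup.commutator_mem_commutator ha₀ hb₀
      rw [hcommbot, Subgroup.mem_bot] at this
      exact this
    have hcomm := commutatorElement_eq_one_iff_commute.mp this
    exact congrArg Subtype.val hcomm.eq
  · rintro g hgG a ⟨a₀, ha₀, rfl⟩
    haveI := derivedSeries_normal ↥G (n - 1)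
    have : (⟨g, hgG⟩ : ↥G) * a₀ * (⟨g, hgG⟩ : ↥G)⁻¹ ∈ A₀ := this.conj_mem a₀ ha₀ _
    exact ⟨_, this, rfl⟩

private lemma exists_torsion (G : Subgroup (Perm Ω)) (hsol : IsSolvable ↥G)
    (hnt : ∃ g ∈ G, g ≠ (1 : Perm Ω)) :
    ∃ (N : Subgroup (Perm Ω)) (p : ℕ), p.Prime ∧ N ≤ G ∧
      (∃ a ∈ N, a ≠ (1 : Perm Ω)) ∧
      (∀ a ∈ N, ∀ b ∈ N, a * b = b * a) ∧
      (∀ g ∈ G, ∀ a ∈ N, g * a * g⁻¹ ∈ N) ∧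
      (∀ a ∈ N, a ^ p = 1) := by
  obtain ⟨A, hAG, ⟨a, haA, hane⟩, hAcomm, hAconj⟩ := exists_abelian G hsol hnt
  have hofin : orderOf a ≠ 1 := by
    intro h
    exact hane (orderOf_eq_one_iff.mp h)
  set p := (orderOf a).minFac with hp
  have hpp : p.Prime := Nat.minFac_prime hofin
  have hpdvd : p ∣ orderOf a := Nat.minFac_dvd _
  refine ⟨{ carrier := {x | x ∈ A ∧ x ^ p = 1},
            one_mem' := ⟨A.one_mem, one_pow p⟩,
            mul_mem' := ?_,
            inv_mem' := ?_ }, p, hpp, ?_, ?_, ?_, ?_, ?_⟩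
  · rintro x y ⟨hxA, hxp⟩ ⟨hyA, hyp⟩
    refine ⟨A.mul_mem hxA hyA, ?_⟩
    have hc : Commute x y := hAcomm x hxA y hyA
    rw [hc.mul_pow, hxp, hyp, one_mul]
  · rintro x ⟨hxA, hxp⟩
    exact ⟨A.inv_mem hxA, by rw [inv_pow, hxp, inv_one]⟩
  · intro x hx
    exact hAG hx.1
  · -- nontrivial element
    have hopos : 0 < orderOf a := orderOf_pos a
    refine ⟨a ^ (orderOf a / p), ⟨A.pow_mem haA _, ?_⟩, ?_⟩
    · rw [← pow_mul, Nat.div_mul_cancel hpdvd, pow_orderOf_eq_one]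
    · intro h
      have hord : orderOf (a ^ (orderOf a / p)) = p := by
        rw [orderOf_pow]
        have h1 : Nat.gcd (orderOf a) (orderOf a / p) = orderOf a / p :=
          Nat.gcd_eq_right (Nat.div_dvd_of_dvd hpdvd)
        rw [h1]
        rw [Nat.div_div_self hpdvd (by omega)]
      rw [h, orderOf_one] at hord
      exact hpp.ne_one hord.symm
  · intro x hx y hy
    exact hAcomm x hx.1 y hy.1
  · intro g hg x hx
    exact ⟨hAconj g hg x hx.1, by rw [conj_pow, hx.2, mul_one, mul_inv_cancel]⟩
  · intro x hx
    exact hx.2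

private lemma subgroup_eq_of_le_of_card_le {K : Type*} [Group K] [Finite K]
    {H T : Subgroup K} (h : H ≤ T) (hc : Nat.card T ≤ Nat.card H) : H = T := by
  apply SetLike.coe_injective
  refine Set.eq_of_subset_of_ncard_le h ?_ (Set.toFinite _)
  have h1 : ((H : Set K)).ncard = Nat.card H := by rw [← Nat.card_coe_set_eq]; rfl
  have h2 : ((T : Set K)).ncard = Nat.card T := by rw [← Nat.card_coe_set_eq]; rfl
  omega

private lemma caseII (G N : Subgroup (Perm Ω)) (p : ℕ) (hp : p.Prime) (hNG : N ≤ G)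
    (hcomm : ∀ a ∈ N, ∀ b ∈ N, a * b = b * a)
    (hconj : ∀ g ∈ G, ∀ a ∈ N, g * a * g⁻¹ ∈ N)
    (hpow : ∀ a ∈ N, a ^ p = 1)
    (htr : ∀ α β : Ω, ∃ g ∈ G, g α = β)
    (hnofpf : ¬∃ g ∈ G, (orderOf g).Prime ∧ ∀ x : Ω, g x ≠ x)
    (hbound : ∀ g ∈ G, g ≠ 1 → fixedCount g ≤ 5)
    {α β : Ω} (hne : stabilizer ↥N α ≠ stabilizer ↥N β)
    (hsup : stabilizer ↥N α ⊔ stabilizer ↥N β ≠ ⊤) : False := by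
  classical
  haveI : Fintype ↥N := Fintype.ofFinite _
  have cs_eq : ∀ y z : Ω, Nat.card (stabilizer ↥N y) = Nat.card (stabilizer ↥N z) :=
    fun y z => card_stab_eq G N hNG hconj htr y z
  -- the two stabilizers have cardinality at least 2
  have cs2 : 2 ≤ Nat.card (stabilizer ↥N α) := by
    have hpos : 0 < Nat.card (stabilizer ↥N α) := Nat.card_pos
    have hne1 : Nat.card (stabilizer ↥N α) ≠ 1 := by
      intro h1
      have hbα : stabilizer ↥N α = ⊥ := Subgroup.card_eq_one.mp h1
      have hbβ : stabilizer ↥N β = ⊥ := Subgroup.card_eq_one.mp ((cs_eq β α).trans h1)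
      exact hne (hbα.trans hbβ.symm)
    omega
  -- fixity bound on orbit sizes
  have hq5 : ∀ (y : Ω) (n : ↥N), n ∈ stabilizer ↥N y → n ≠ 1 →
      Nat.card (orbit ↥N y) ≤ 5 := by
    intro y n hmem hne1
    have h1 := orbit_card_le_fixedCount N hcomm hmem
    have h2 : fixedCount ((n : ↥N) : Perm Ω) ≤ 5 :=
      hbound _ (hNG n.2) (fun hh => hne1 (Subtype.ext hh))
    omega
  have hex_stab : ∀ y : Ω, 2 ≤ Nat.card (stabilizer ↥N y) →
      ∃ n : ↥N, n ∈ stabilizer ↥N y ∧ n ≠ 1 := by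
    intro y hy
    by_contra h
    push_neg at h
    have : stabilizer ↥N y = ⊥ := (Subgroup.eq_bot_iff_forall _).mpr h
    rw [this] at hy
    have : Nat.card (⊥ : Subgroup ↥N) = 1 := Subgroup.card_bot
    omega
  obtain ⟨n₀, hn₀S, hn₀1⟩ := hex_stab α cs2
  -- orbit sizes are equal to 4, |stab|=2, |N|=8
  have hosα := orbit_stab_card N α
  have hosβ := orbit_stab_card N β
  have hqα5 : Nat.card (orbit ↥N α) ≤ 5 := hq5 α n₀ hn₀S hn₀1
  have hTne1 : stabilizer ↥N α ≠ stabilizer ↥N α ⊔ stabilizer ↥N β := by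
    intro h
    have hβle : stabilizer ↥N β ≤ stabilizer ↥N α := h ▸ le_sup_right
    exact hne (subgroup_eq_of_le_of_card_le hβle (le_of_eq (cs_eq α β))).symm
  have hd1 : Nat.card (stabilizer ↥N α) ∣ Nat.card ↥(stabilizer ↥N α ⊔ stabilizer ↥N β) :=
    Subgroup.card_dvd_of_le le_sup_left
  have hd2 : Nat.card ↥(stabilizer ↥N α ⊔ stabilizer ↥N β) ∣ Nat.card ↥N :=
    Subgroup.card_subgroup_dvd_card _
  obtain ⟨b, hb⟩ := hd1
  obtain ⟨a, haa⟩ := hd2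
  have hTpos : 0 < Nat.card ↥(stabilizer ↥N α ⊔ stabilizer ↥N β) := Nat.card_pos
  have hNpos : 0 < Nat.card ↥N := Nat.card_pos
  have hb2 : 2 ≤ b := by
    rcases b with _ | _ | b
    · omega
    · exfalso
      have hb' : Nat.card ↥(stabilizer ↥N α ⊔ stabilizer ↥N β)
          ≤ Nat.card ↥(stabilizer ↥N α) := by omega
      exact hTne1 (subgroup_eq_of_le_of_card_le le_sup_left hb')
    · omega
  have ha2 : 2 ≤ a := by
    rcases a with _ | _ | a
    · omega
    · exfalso
      have : (stabilizer ↥N α ⊔ stabilizer ↥N β) = ⊤ := by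
        apply subgroup_eq_of_le_of_card_le le_top
        rw [Subgroup.card_top]
        omega
      exact hsup this
    · omega
  have hqα : Nat.card (orbit ↥N α) = b * a := by
    have h1 : Nat.card (orbit ↥N α) * Nat.card (stabilizer ↥N α)
        = b * a * Nat.card (stabilizer ↥N α) := by
      rw [hosα, haa, hb]; ring
    have hspos : 0 < Nat.card (stabilizer ↥N α) := Nat.card_pos
    exact Nat.eq_of_mul_eq_mul_right hspos h1
  have hb2' : b = 2 ∧ a = 2 := by
    constructor <;> nlinarith [hqα5, hqα, hb2, ha2]
  have hq4 : Nat.card (orbit ↥N α) = 4 := by rw [hqα, hb2'.1, hb2'.2]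
  have hN4s : Nat.card ↥N = 4 * Nat.card (stabilizer ↥N α) := by
    rw [haa, hb, hb2'.1, hb2'.2]; ring
  have hqβ4 : Nat.card (orbit ↥N β) = 4 := by
    have h1 : Nat.card (orbit ↥N β) * Nat.card (stabilizer ↥N β)
        = 4 * Nat.card (stabilizer ↥N β) := by
      rw [hosβ, hN4s, cs_eq α β]
    have hspos : 0 < Nat.card (stabilizer ↥N β) := Nat.card_pos
    exact Nat.eq_of_mul_eq_mul_right hspos h1
  -- trivial intersection
  have horbne : orbit ↥N α ≠ orbit ↥N β := by
    intro h
    exact hne (stab_eq_of_mem_orbit N hcomm (h ▸ mem_orbit_self β)).symm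
  have hint : stabilizer ↥N α ⊓ stabilizer ↥N β = ⊥ := by
    rw [Subgroup.eq_bot_iff_forall]
    intro n hn
    by_contra hne1
    have h1 := two_orbit_card_le N hcomm hn.1 hn.2 horbne
    have h2 : fixedCount ((n : ↥N) : Perm Ω) ≤ 5 :=
      hbound _ (hNG n.2) (fun hh => hne1 (Subtype.ext hh))
    rw [hq4, hqβ4] at h1
    omega
  -- product injection gives |stab| = 2
  have hprod : Nat.card (stabilizer ↥N α) * Nat.card (stabilizer ↥N β)
      ≤ Nat.card ↥(stabilizer ↥N α ⊔ stabilizer ↥N β) := by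
    rw [← Nat.card_prod]
    apply Nat.card_le_card_of_injective
      (fun ab : ↥(stabilizer ↥N α) × ↥(stabilizer ↥N β) =>
        (⟨(ab.1 : ↥N) * (ab.2 : ↥N),
          Subgroup.mul_mem _ (Subgroup.mem_sup_left ab.1.2) (Subgroup.mem_sup_right ab.2.2)⟩ :
          ↥(stabilizer ↥N α ⊔ stabilizer ↥N β)))
    rintro ⟨a1, b1⟩ ⟨a2, b2⟩ hab
    have h1 : (a1 : ↥N) * (b1 : ↥N) = (a2 : ↥N) * (b2 : ↥N) := congrArg Subtype.val hab
    have h2 : (a2 : ↥N)⁻¹ * (a1 : ↥N) = (b2 : ↥N) * (b1 : ↥N)⁻¹ := by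
      have h3 : (a2 : ↥N)⁻¹ * ((a1 : ↥N) * (b1 : ↥N)) * (b1 : ↥N)⁻¹
          = (a2 : ↥N)⁻¹ * ((a2 : ↥N) * (b2 : ↥N)) * (b1 : ↥N)⁻¹ := by rw [h1]
      calc (a2 : ↥N)⁻¹ * (a1 : ↥N)
          = (a2 : ↥N)⁻¹ * (((a1 : ↥N) * (b1 : ↥N)) * (b1 : ↥N)⁻¹) := by group
        _ = (a2 : ↥N)⁻¹ * ((a1 : ↥N) * (b1 : ↥N)) * (b1 : ↥N)⁻¹ := by group
        _ = (a2 : ↥N)⁻¹ * ((a2 : ↥N) * (b2 : ↥N)) * (b1 : ↥N)⁻¹ := h3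
        _ = (b2 : ↥N) * (b1 : ↥N)⁻¹ := by group
    have hmem : (a2 : ↥N)⁻¹ * (a1 : ↥N) ∈ stabilizer ↥N α ⊓ stabilizer ↥N β := by
      constructor
      · exact Subgroup.mul_mem _ (Subgroup.inv_mem _ a2.2) a1.2
      · rw [h2]
        exact Subgroup.mul_mem _ b2.2 (Subgroup.inv_mem _ b1.2)
    rw [hint, Subgroup.mem_bot] at hmem
    have hae : (a2 : ↥N) = (a1 : ↥N) := inv_mul_eq_one.mp hmem
    have hmem2 : (b2 : ↥N) * (b1 : ↥N)⁻¹ = 1 := by rw [← h2]; exact hmem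
    have hbe : (b2 : ↥N) = (b1 : ↥N) := mul_inv_eq_one.mp hmem2
    have : a1 = a2 := Subtype.ext (Subtype.ext (congrArg Subtype.val hae.symm))
    have hbb : b1 = b2 := Subtype.ext (Subtype.ext (congrArg Subtype.val hbe.symm))
    simp [Prod.ext_iff]
    exact ⟨this, hbb⟩
  have hcsle : Nat.card ↥(stabilizer ↥N α) ≤ 2 := by
    have h1 : Nat.card ↥(stabilizer ↥N β) = Nat.card ↥(stabilizer ↥N α) := cs_eq β α
    nlinarith [hprod, hb, hb2'.1, cs2, h1]
  have hcs2 : Nat.card ↥(stabilizer ↥N α) = 2 := le_antisymm hcsle cs2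
  have hN8 : Nat.card ↥N = 8 := by rw [hN4s, hcs2]
  have hcsy : ∀ y : Ω, Nat.card ↥(stabilizer ↥N y) = 2 := fun y => (cs_eq y α).trans hcs2
  have hqy : ∀ y : Ω, Nat.card (orbit ↥N y) = 4 := by
    intro y
    have h1 := orbit_stab_card N y
    rw [hcsy y, hN8] at h1
    omega
  have hpair : ∀ y z : Ω, orbit ↥N y ≠ orbit ↥N z →
      stabilizer ↥N y ⊓ stabilizer ↥N z = ⊥ := by
    intro y z hyz
    rw [Subgroup.eq_bot_iff_forall]
    intro n hn
    by_contra hne1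
    have h1 := two_orbit_card_le N hcomm hn.1 hn.2 hyz
    have h2 : fixedCount ((n : ↥N) : Perm Ω) ≤ 5 :=
      hbound _ (hNG n.2) (fun hh => hne1 (Subtype.ext hh))
    rw [hqy y, hqy z] at h1
    omega
  have huniq : ∀ y : Ω, ∃ n : ↥N, (n ∈ stabilizer ↥N y ∧ n ≠ 1) ∧
      ∀ m : ↥N, m ∈ stabilizer ↥N y → m ≠ 1 → m = n := by
    intro y
    obtain ⟨n, hnS, hn1⟩ := hex_stab y (le_of_eq (hcsy y).symm)
    refine ⟨n, ⟨hnS, hn1⟩, ?_⟩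
    intro m hmS hm1
    by_contra hmn
    haveI : Fintype ↥(stabilizer ↥N y) := Fintype.ofFinite _
    have hcard3 : ({⟨m, hmS⟩, ⟨n, hnS⟩, ⟨1, Subgroup.one_mem _⟩} :
        Finset ↥(stabilizer ↥N y)).card = 3 := by
      rw [Finset.card_insert_of_notMem, Finset.card_insert_of_notMem,
        Finset.card_singleton]
      · simp only [Finset.mem_singleton]
        intro h
        exact hn1 (congrArg Subtype.val h)
      · simp only [Finset.mem_insert, Finset.mem_singleton]
        rintro (h | h)
        · exact hmn (congrArg Subtype.val h)
        · exact hm1 (congrArg Subtype.val h)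
    have hle := Finset.card_le_univ ({⟨m, hmS⟩, ⟨n, hnS⟩, ⟨1, Subgroup.one_mem _⟩} :
        Finset ↥(stabilizer ↥N y))
    rw [hcard3, ← Nat.card_eq_fintype_card, hcsy y] at hle
    omega
  choose w hw hwu using huniq
  have hsame : ∀ y z : Ω, z ∈ orbit ↥N y → w z = w y := by
    intro y z hz
    have hse : stabilizer ↥N z = stabilizer ↥N y := stab_eq_of_mem_orbit N hcomm hz
    exact hwu y (w z) (hse ▸ (hw z).1) (hw z).2
  have hdiff : ∀ y z : Ω, w z = w y → z ∈ orbit ↥N y := by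
    intro y z hzy
    by_contra hno
    have horb : orbit ↥N z ≠ orbit ↥N y := fun h => hno (h ▸ mem_orbit_self z)
    have hbot := hpair z y horb
    have hmem : w z ∈ stabilizer ↥N z ⊓ stabilizer ↥N y :=
      ⟨(hw z).1, by rw [hzy]; exact (hw y).1⟩
    rw [hbot, Subgroup.mem_bot] at hmem
    exact (hw z).2 hmem
  have hsurj : ∀ n : ↥N, n ≠ 1 → ∃ y : Ω, w y = n := by
    intro n hn1
    haveI : Fact p.Prime := ⟨hp⟩
    have hord : orderOf ((n : ↥N) : Perm Ω) = p :=
      orderOf_eq_prime (hpow _ n.2) (fun h => hn1 (Subtype.ext h))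
    have hfix : ∃ x : Ω, ((n : ↥N) : Perm Ω) x = x := by
      by_contra hno
      push_neg at hno
      exact hnofpf ⟨_, hNG n.2, by rw [hord]; exact hp, hno⟩
    obtain ⟨x, hx⟩ := hfix
    exact ⟨x, (hwu x n hx hn1).symm⟩
  have hfiber : ∀ y₀ : Ω, (Finset.univ.filter (fun z => w z = w y₀)).card = 4 := by
    intro y₀
    have hfil : Finset.univ.filter (fun z => w z = w y₀)
        = Finset.univ.filter (fun z => z ∈ orbit ↥N y₀) := by
      ext z
      simp only [Finset.mem_filter, Finset.mem_univ, true_and]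
      exact ⟨hdiff y₀ z, hsame y₀ z⟩
    rw [hfil]
    have h1 : (Finset.univ.filter (fun z => z ∈ orbit ↥N y₀)).card
        = Fintype.card {z : Ω // z ∈ orbit ↥N y₀} := (Fintype.card_subtype _).symm
    rw [h1, ← Nat.card_eq_fintype_card]
    exact hqy y₀
  have hNf : Fintype.card ↥N = 8 := by rw [← Nat.card_eq_fintype_card]; exact hN8
  have hcardΩ : Fintype.card Ω = 28 := by
    have himg : Finset.univ.image w = Finset.univ.erase 1 := by
      ext n
      simp only [Finset.mem_image, Finset.mem_univ, true_and, Finset.mem_erase, and_true]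
      constructor
      · rintro ⟨y, rfl⟩
        exact (hw y).2
      · intro hn
        exact hsurj n hn
    have hsum := Finset.card_eq_sum_card_image w Finset.univ
    rw [Finset.card_univ] at hsum
    have hsum2 : ∑ n ∈ Finset.univ.image w,
        (Finset.univ.filter (fun y => w y = n)).card
        = ∑ _n ∈ Finset.univ.image w, 4 := by
      apply Finset.sum_congr rfl
      intro n hn
      obtain ⟨y₀, -, rfl⟩ := Finset.mem_image.mp hn
      exact hfiber y₀
    rw [hsum2, Finset.sum_const, smul_eq_mul, himg,
      Finset.card_erase_of_mem (Finset.mem_univ 1), Finset.card_univ, hNf] at hsum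
    omega
  -- G contains an element of order 7
  have horbG : (orbit ↥G α : Set Ω) = Set.univ := by
    ext z
    simp only [Set.mem_univ, iff_true]
    obtain ⟨g, hgG, hgz⟩ := htr α z
    exact ⟨⟨g, hgG⟩, hgz⟩
  have hcardorbG : Nat.card (orbit ↥G α) = 28 := by
    rw [horbG, Nat.card_coe_set_eq, Set.ncard_univ, Nat.card_eq_fintype_card, hcardΩ]
  have hosG := orbit_stab_card G α
  have h7 : (7 : ℕ) ∣ Nat.card ↥G := by
    refine dvd_trans (by norm_num : (7:ℕ) ∣ 28) ⟨Nat.card ↥(stabilizer ↥G α), ?_⟩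
    rw [← hosG, hcardorbG]
  haveI : Fact (Nat.Prime 7) := ⟨by norm_num⟩
  haveI : Fintype ↥G := Fintype.ofFinite _
  obtain ⟨gG, hord7⟩ := exists_prime_orderOf_dvd_card (G := ↥G) 7
    (by rwa [← Nat.card_eq_fintype_card])
  have hgG : (gG : Perm Ω) ∈ G := gG.2
  have hordg : orderOf ((gG : ↥G) : Perm Ω) = 7 := by
    rw [← hord7]
    exact orderOf_injective G.subtype G.subtype_injective gG
  set g : Perm Ω := ((gG : ↥G) : Perm Ω) with hgdef
  have hg7 : g ^ 7 = 1 := by rw [← hordg]; exact pow_orderOf_eq_one g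
  have hfixg : ∃ x : Ω, g x = x := by
    by_contra hno
    push_neg at hno
    exact hnofpf ⟨g, hgG, by rw [hordg]; norm_num, hno⟩
  obtain ⟨x, hgx⟩ := hfixg
  set c : ↥N → ↥N := fun n => ⟨g * ((n : ↥N) : Perm Ω) * g⁻¹, hconj g hgG _ n.2⟩ with hcdef
  have hcapp : ∀ n : ↥N, ((c n : ↥N) : Perm Ω) = g * ((n : ↥N) : Perm Ω) * g⁻¹ :=
    fun n => rfl
  have hcinj : Function.Injective c := by
    intro m m' h
    have h1 : g * ((m : ↥N) : Perm Ω) * g⁻¹ = g * ((m' : ↥N) : Perm Ω) * g⁻¹ :=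
      congrArg Subtype.val h
    exact Subtype.ext (mul_left_cancel (mul_right_cancel h1))
  have hc1 : c 1 = 1 := by
    apply Subtype.ext
    show g * (1 : Perm Ω) * g⁻¹ = 1
    group
  have hck : ∀ (k : ℕ) (n : ↥N),
      ((c^[k] n : ↥N) : Perm Ω) = g ^ k * ((n : ↥N) : Perm Ω) * (g ^ k)⁻¹ := by
    intro k
    induction k with
    | zero => intro n; simp
    | succ k ih =>
      intro n
      rw [Function.iterate_succ_apply', hcapp (c^[k] n), ih n]
      rw [pow_succ']
      group
  have hc7 : ∀ n : ↥N, c^[7] n = n := by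
    intro n
    apply Subtype.ext
    rw [hck 7 n, hg7]
    group
  have hstabfix : ∀ (y : Ω) (n : ↥N), n ∈ stabilizer ↥N y → c n ∈ stabilizer ↥N (g y) := by
    intro y n hny
    show (g * ((n : ↥N) : Perm Ω) * g⁻¹) (g y) = g y
    rw [Equiv.Perm.mul_apply, Equiv.Perm.mul_apply]
    rw [show g⁻¹ (g y) = y from Equiv.symm_apply_apply g y]
    rw [show ((n : ↥N) : Perm Ω) y = y from hny]
  have hcne1 : ∀ n : ↥N, n ≠ 1 → c n ≠ 1 := by
    intro n hn1 h
    exact hn1 (hcinj (h.trans hc1.symm))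
  have hcw : ∀ y : Ω, c (w y) = w (g y) := by
    intro y
    exact hwu (g y) (c (w y)) (hstabfix y (w y) (hw y).1) (hcne1 (w y) (hw y).2)
  have hcwx : c (w x) = w x := by
    rw [hcw x, hgx]
  have hcid : ∀ n : ↥N, c n = n := by
    intro n
    by_contra hcn
    have hn1 : n ≠ 1 := by rintro rfl; exact hcn hc1
    have hnwx : n ≠ w x := by rintro rfl; exact hcn hcwx
    have hper : Function.IsPeriodicPt c 7 n := hc7 n
    have hmp : Function.minimalPeriod c n ∣ 7 := hper.minimalPeriod_dvd
    have hmp17 : Function.minimalPeriod c n = 1 ∨ Function.minimalPeriod c n = 7 :=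
      (Nat.Prime.eq_one_or_self_of_dvd (by norm_num) _ hmp)
    rcases hmp17 with h1 | h7
    · exact hcn (Function.minimalPeriod_eq_one_iff_isFixedPt.mp h1)
    · have hinj7 : Set.InjOn (fun i => c^[i] n) (Set.Iio 7) := by
        rw [← h7]
        exact Function.iterate_injOn_Iio_minimalPeriod
      have hA : ((Finset.range 7).image (fun i => c^[i] n)).card = 7 := by
        rw [Finset.card_image_of_injOn, Finset.card_range]
        intro i hi j hj hij
        exact hinj7 (by simpa using hi) (by simpa using hj) hij
      have hfix1 : Function.IsFixedPt c 1 := hc1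
      have hfixwx : Function.IsFixedPt c (w x) := hcwx
      have h1A : (1 : ↥N) ∉ (Finset.range 7).image (fun i => c^[i] n) := by
        intro h
        obtain ⟨i, _, hie⟩ := Finset.mem_image.mp h
        exact hn1 ((Function.Injective.iterate hcinj i)
          (hie.trans ((hfix1.iterate i)).symm))
      have hwA : w x ∉ (Finset.range 7).image (fun i => c^[i] n) := by
        intro h
        obtain ⟨i, _, hie⟩ := Finset.mem_image.mp h
        exact hnwx ((Function.Injective.iterate hcinj i)
          (hie.trans ((hfixwx.iterate i)).symm))
      have h1wx : (1 : ↥N) ≠ w x := fun h => (hw x).2 h.symm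
      have h9 : (insert (1 : ↥N) (insert (w x)
          ((Finset.range 7).image (fun i => c^[i] n)))).card = 9 := by
        rw [Finset.card_insert_of_notMem, Finset.card_insert_of_notMem hwA, hA]
        simp only [Finset.mem_insert]
        push_neg
        exact ⟨h1wx, h1A⟩
      have hle9 := Finset.card_le_univ (insert (1 : ↥N) (insert (w x)
          ((Finset.range 7).image (fun i => c^[i] n))))
      rw [h9, hNf] at hle9
      omega
  have hgorb : ∀ y : Ω, g y ∈ orbit ↥N y := by
    intro y
    apply hdiff y (g y)
    rw [← hcw y, hcid (w y)]
  have hiterg : ∀ (k : ℕ) (z : Ω), (fun u => g u)^[k] z = (g ^ k) z := by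
    intro k
    induction k with
    | zero => intro z; simp
    | succ k ih =>
      intro z
      rw [Function.iterate_succ_apply', ih z, ← Equiv.Perm.mul_apply, ← pow_succ']
  have hfilorb : ∀ y : Ω, (Finset.univ.filter (fun z => z ∈ orbit ↥N y)).card = 4 := by
    intro y
    have h1 : (Finset.univ.filter (fun z => z ∈ orbit ↥N y)).card
        = Fintype.card {z : Ω // z ∈ orbit ↥N y} := (Fintype.card_subtype _).symm
    rw [h1, ← Nat.card_eq_fintype_card]
    exact hqy y
  have hgyfix : ∀ y : Ω, g y = y := by
    intro y
    have hper : Function.IsPeriodicPt (fun u => g u) 7 y := by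
      show (fun u => g u)^[7] y = y
      rw [hiterg 7 y, hg7]
      rfl
    have hmp := hper.minimalPeriod_dvd
    rcases Nat.Prime.eq_one_or_self_of_dvd (by norm_num : Nat.Prime 7) _ hmp with h1 | h7
    · exact Function.minimalPeriod_eq_one_iff_isFixedPt.mp h1
    · exfalso
      have hinj7 : Set.InjOn (fun i => (fun u => g u)^[i] y) (Set.Iio 7) := by
        rw [← h7]
        exact Function.iterate_injOn_Iio_minimalPeriod
      have hiter_orb : ∀ i : ℕ, (fun u => g u)^[i] y ∈ orbit ↥N y := by
        intro i
        induction i with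
        | zero => exact mem_orbit_self y
        | succ i ih =>
          rw [Function.iterate_succ_apply']
          have h2 := hgorb ((fun u => g u)^[i] y)
          rw [orbit_eq_of_mem N ih] at h2
          exact h2
      have hB : ((Finset.range 7).image (fun i => (fun u => g u)^[i] y)).card = 7 := by
        rw [Finset.card_image_of_injOn, Finset.card_range]
        intro i hi j hj hij
        exact hinj7 (by simpa using hi) (by simpa using hj) hij
      have hsub : (Finset.range 7).image (fun i => (fun u => g u)^[i] y)
          ⊆ Finset.univ.filter (fun z => z ∈ orbit ↥N y) := by
        intro z hz
        obtain ⟨i, _, rfl⟩ := Finset.mem_image.mp hz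
        simp only [Finset.mem_filter, Finset.mem_univ, true_and]
        exact hiter_orb i
      have hle4 := Finset.card_le_card hsub
      rw [hB, hfilorb y] at hle4
      omega
  have hgone : g = 1 := Equiv.ext hgyfix
  rw [hgone, orderOf_one] at hordg
  norm_num at hordg

end Stmt13Aux

end Stmt13AuxSection

/-- a 2-closed elusive solvable group of fixity `f` satisfies `f ≥ 6`. -/
theorem stmt_13 (G : Subgroup (Equiv.Perm Ω)) (f : ℕ) (h2c : IsTwoClosed G)
    (hel : IsElusive G) (hsol : IsSolvable ↥G) (hfix : HasFixity G f) :
    6 ≤ f := by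
  by_contra hlt
  push_neg at hlt
  obtain ⟨hbound', g₀, hg₀G, hg₀ne, -⟩ := hfix
  obtain ⟨htr, hnofpf⟩ := hel
  obtain ⟨N, p, hp, hNG, ha, hcomm, hconj, hpow⟩ :=
    Stmt13Aux.exists_torsion G hsol ⟨g₀, hg₀G, hg₀ne⟩
  have hbound : ∀ g ∈ G, g ≠ 1 → fixedCount g ≤ 5 := fun g hg hgne =>
    le_trans (hbound' g hg hgne) (by omega)
  by_cases hP : ∀ y z : Ω, MulAction.stabilizer ↥N y = MulAction.stabilizer ↥N z ∨
      MulAction.stabilizer ↥N y ⊔ MulAction.stabilizer ↥N z = ⊤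
  · exact Stmt13Aux.caseI G N p hp hNG ha hcomm hconj hpow h2c htr hnofpf hP
  · push_neg at hP
    obtain ⟨y, z, hney, hsupy⟩ := hP
    exact Stmt13Aux.caseII G N p hp hNG hcomm hconj hpow htr hnofpf hbound hney hsupy
end

section
/- Let Ω be a finite set, let G ≤ Sym(Ω) be an elusive permutation group, and let N be a non-trivial abelian normal subgroup of G. Then |N| is not squarefree; in particular |N| is not a prime. -/
variable {Ω : Type*} [Fintype Ω]

/-- the order of a non-trivial abelian normal subgroup of an elusive
group is not squarefree; in particular it is not a prime. -/
theorem stmt_14 (G : Subgroup (Equiv.Perm Ω)) (hel : IsElusive G)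
    (N : Subgroup ↥G) (hNnormal : N.Normal) (hNbot : N ≠ ⊥)
    (hNab : ∀ a b : ↥N, a * b = b * a) :
    ¬ Squarefree (Nat.card ↥N) ∧ ¬ (Nat.card ↥N).Prime := by
  suffices hsf : ¬ Squarefree (Nat.card ↥N) by
    exact ⟨hsf, fun hpr => hsf hpr.squarefree⟩
  intro hsf
  -- get a prime p dividing |N|
  have hcard : 1 < Nat.card ↥N := N.one_lt_card_iff_ne_bot.mpr hNbot
  obtain ⟨p, hp, hpdvd⟩ := Nat.exists_prime_and_dvd (by omega : Nat.card ↥N ≠ 1)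
  haveI : Fact p.Prime := ⟨hp⟩
  -- Cauchy: an element of order p in N
  obtain ⟨x₀, hx₀⟩ := exists_prime_orderOf_dvd_card' (G := ↥N) p hpdvd
  set x : ↥G := (x₀ : ↥G) with hxdef
  have hxN : x ∈ N := x₀.2
  have hxord : orderOf x = p := by
    rw [← hx₀]
    exact orderOf_injective N.subtype N.subtype_injective x₀
  -- the p-torsion subgroup K of N
  have hcomm : ∀ a b : ↥G, a ∈ N → b ∈ N → a * b = b * a := by
    intro a b ha hb
    exact Subtype.ext_iff.mp (hNab ⟨a, ha⟩ ⟨b, hb⟩)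
  let K : Subgroup ↥G :=
  { carrier := {g : ↥G | g ∈ N ∧ g ^ p = 1}
    one_mem' := ⟨N.one_mem, one_pow p⟩
    mul_mem' := by
      rintro a b ⟨haN, hap⟩ ⟨hbN, hbp⟩
      refine ⟨N.mul_mem haN hbN, ?_⟩
      rw [(Commute.mul_pow (hcomm a b haN hbN)), hap, hbp, one_mul]
    inv_mem' := by
      rintro a ⟨haN, hap⟩
      exact ⟨N.inv_mem haN, by rw [inv_pow, hap, inv_one]⟩ }
  have hKmem : ∀ g : ↥G, g ∈ K ↔ g ∈ N ∧ g ^ p = 1 := fun g => Iff.rfl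
  have hKnormal : K.Normal := by
    constructor
    rintro n ⟨hnN, hnp⟩ g
    refine ⟨hNnormal.conj_mem n hnN g, ?_⟩
    rw [conj_pow, hnp, mul_one, mul_inv_cancel]
  have hxK : x ∈ K := ⟨hxN, by rw [← hxord, pow_orderOf_eq_one]⟩
  -- K is a p-group contained in N, so |K| = p by squarefreeness
  have hKp : IsPGroup p ↥K := by
    intro g
    refine ⟨1, ?_⟩
    rw [pow_one]
    exact Subtype.ext (by rw [Subgroup.coe_pow]; exact g.2.2)
  obtain ⟨n, hn⟩ := (IsPGroup.iff_card).mp hKp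
  have hKleN : K ≤ N := fun g hg => hg.1
  have hdvd : Nat.card ↥K ∣ Nat.card ↥N := Subgroup.card_dvd_of_le hKleN
  have hn1 : n = 1 := by
    have hge : 1 ≤ n := by
      by_contra h
      push_neg at h
      interval_cases n
      · have : orderOf x ∣ Nat.card ↥K := by
          have : x ∈ Subgroup.zpowers x := Subgroup.mem_zpowers x
          calc orderOf x = Nat.card (Subgroup.zpowers x) := (Nat.card_zpowers x).symm
            _ ∣ Nat.card ↥K := Subgroup.card_dvd_of_le (Subgroup.zpowers_le.mpr hxK)
        rw [hn, pow_zero, Nat.dvd_one, hxord] at this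
        exact hp.one_lt.ne' this
    have hle : n ≤ 1 := by
      by_contra h
      push_neg at h
      have hsq : p * p ∣ Nat.card ↥N := by
        calc p * p = p ^ 2 := (sq p).symm
          _ ∣ p ^ n := pow_dvd_pow p h
          _ ∣ Nat.card ↥N := hn ▸ hdvd
      exact hp.one_lt.ne' (Nat.isUnit_iff.mp (hsf p hsq))
    omega
  -- K = ⟨x⟩
  have hKx : Subgroup.zpowers x = K := by
    refine Subgroup.eq_of_le_of_card_ge (Subgroup.zpowers_le.mpr hxK) ?_
    rw [Nat.card_zpowers x, hxord, hn, hn1, pow_one]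
  -- x has no fixed point
  have hfree : ∀ α : Ω, (x : Equiv.Perm Ω) α ≠ α := by
    intro α hα
    have hall : ∀ β : Ω, (x : Equiv.Perm Ω) β = β := by
      intro β
      obtain ⟨h, hhG, hhαβ⟩ := hel.1 α β
      set H : ↥G := ⟨h, hhG⟩ with hHdef
      have hy : H⁻¹ * x * H ∈ K := by
        have := hKnormal.conj_mem x hxK H⁻¹
        rwa [inv_inv] at this
      rw [← hKx] at hy
      obtain ⟨k, hk⟩ := hy
      have hk' : x ^ k = H⁻¹ * x * H := hk
      have hfix : ((x ^ k : ↥G) : Equiv.Perm Ω) α = α := by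
        rw [Subgroup.coe_zpow]
        exact (Function.IsFixedPt.perm_zpow hα k)
      rw [hk'] at hfix
      have : (h⁻¹ : Equiv.Perm Ω) ((x : Equiv.Perm Ω) (h α)) = α := by
        simpa [Equiv.Perm.mul_apply] using hfix
      have : (x : Equiv.Perm Ω) (h α) = h α := by
        have := congrArg h this
        simpa using this
      rwa [hhαβ] at this
    have hx1 : x = 1 := by
      apply Subtype.ext
      exact Equiv.ext hall
    rw [hx1, orderOf_one] at hxord
    exact hp.one_lt.ne' hxord.symm
  exact hel.2 ⟨(x : Equiv.Perm Ω), x.2, by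
    rw [Subgroup.orderOf_coe, hxord]; exact hp, hfree⟩
end

section
/- Let Ω be a finite set, let G ≤ Sym(Ω) be an elusive permutation group of fixity 3, and let N be a non-trivial abelian normal subgroup of G. Then N is isomorphic either to ℤ₂ × ℤ₂ or to ℤ₃ × ℤ₃. -/
variable {Ω : Type*} [Fintype Ω]

section Stmt16Aux

open MulAction

/-- `Fin 2 → A` is additively equivalent to `A × A`. -/
def stmt16ProdAdd (A : Type*) [AddCommMonoid A] : (Fin 2 → A) ≃+ A × A :=
  { piFinTwoEquiv (fun _ => A) with map_add' := fun _ _ => rfl }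

/-- A finite commutative group of order `p ^ 2` and exponent dividing a prime `p`
is isomorphic to `ZMod p × ZMod p` (written multiplicatively). -/
lemma stmt16_classify (p : ℕ) (hp : p.Prime) (H : Type*) [CommGroup H] [Finite H]
    (hexp : ∀ x : H, x ^ p = 1) (hcard : Nat.card H = p ^ 2) :
    Nonempty (H ≃* Multiplicative (ZMod p) × Multiplicative (ZMod p)) := by
  obtain ⟨q, rfl⟩ : ∃ q, p = q + 1 := ⟨p - 1, (Nat.succ_pred_eq_of_pos hp.pos).symm⟩
  haveI : Fact (q+1).Prime := ⟨hp⟩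
  letI mod : Module (ZMod (q+1)) (Additive H) := AddCommGroup.zmodModule (by
    intro x
    show Additive.ofMul ((Additive.toMul x) ^ (q+1)) = 0
    rw [hexp]; rfl)
  haveI : Module.Finite (ZMod (q+1)) (Additive H) := Module.finite_iff_finite.mpr inferInstance
  letI : Fintype (Additive H) := Fintype.ofFinite _
  have hc : Fintype.card (Additive H) = (q+1) ^ Module.finrank (ZMod (q+1)) (Additive H) := by
    have := Module.card_eq_pow_finrank (K := ZMod (q+1)) (V := Additive H)
    rwa [ZMod.card] at this
  have h2 : Fintype.card (Additive H) = (q+1) ^ 2 := by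
    rw [← Nat.card_eq_fintype_card]; exact hcard
  have hrank : Module.finrank (ZMod (q+1)) (Additive H) = 2 :=
    (Nat.pow_right_injective hp.two_le (hc.symm.trans h2).symm).symm
  let b := Module.finBasisOfFinrankEq (ZMod (q+1)) (Additive H) hrank
  let e : Additive H ≃+ ZMod (q+1) × ZMod (q+1) :=
    b.equivFun.toAddEquiv.trans (stmt16ProdAdd (ZMod (q+1)))
  exact ⟨(AddEquiv.toMultiplicativeRight e).trans
    (MulEquiv.prodMultiplicative (ZMod (q+1)) (ZMod (q+1)))⟩

variable {G : Subgroup (Equiv.Perm Ω)} {N : Subgroup ↥G}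

/-- Elements of an "abelian" subgroup fixing a point fix its whole orbit pointwise. -/
lemma stmt16_fix_orbit (hNab : ∀ a b : ↥N, a * b = b * a) (n : ↥N) {α β : Ω}
    (hα : n • α = α) (hβ : β ∈ orbit ↥N α) : n • β = β := by
  obtain ⟨m, rfl⟩ := hβ
  rw [smul_smul, hNab, ← smul_smul, hα]

lemma stmt16_orbit_map (hNnormal : N.Normal) (g : ↥G) (α x : Ω) (hx : x ∈ orbit ↥N α) :
    g • x ∈ orbit ↥N (g • α) := by
  obtain ⟨n, rfl⟩ := hx
  refine ⟨⟨g * ↑n * g⁻¹, hNnormal.conj_mem ↑n n.2 g⟩, ?_⟩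
  simp only [Subgroup.mk_smul, Subgroup.smul_def (S := N), smul_smul, mul_assoc,
    inv_mul_cancel, mul_one]

/-- All orbits of a normal subgroup of a transitive group have equal cardinality. -/
lemma stmt16_orbit_card_eq (hNnormal : N.Normal) (htr : IsTransitive G) (α β : Ω) :
    Nat.card (orbit ↥N α) = Nat.card (orbit ↥N β) := by
  obtain ⟨g0, hg0, hgab⟩ := htr α β
  set g : ↥G := ⟨g0, hg0⟩ with hg
  have hβ : g • α = β := hgab
  refine Nat.card_congr ⟨fun x => ⟨g • ↑x, hβ ▸ stmt16_orbit_map hNnormal g α _ x.2⟩,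
    fun y => ⟨g⁻¹ • ↑y, ?_⟩, fun x => by simp, fun y => by simp⟩
  have h2 : g⁻¹ • β = α := by rw [← hβ, inv_smul_smul]
  have := stmt16_orbit_map hNnormal g⁻¹ β _ y.2
  exact h2 ▸ this

end Stmt16Aux

set_option maxHeartbeats 1000000 in
set_option synthInstance.maxHeartbeats 400000 in
/-- a non-trivial abelian normal subgroup of an elusive group of
fixity `3` is isomorphic to `ℤ₂ × ℤ₂` or to `ℤ₃ × ℤ₃`. -/
theorem stmt_16 (G : Subgroup (Equiv.Perm Ω)) (hel : IsElusive G)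
    (hfix : HasFixity G 3) (N : Subgroup ↥G) (hNnormal : N.Normal) (hNbot : N ≠ ⊥)
    (hNab : ∀ a b : ↥N, a * b = b * a) :
    Nonempty (↥N ≃* (Multiplicative (ZMod 2) × Multiplicative (ZMod 2))) ∨
      Nonempty (↥N ≃* (Multiplicative (ZMod 3) × Multiplicative (ZMod 3))) := by
  classical
  open MulAction in
  obtain ⟨htrans, helusive⟩ := hel
  obtain ⟨hbound, gw, hgwG, hgw1, hgwfix⟩ := hfix
  -- Ω is nonempty
  have hΩne : Nonempty Ω := by
    by_contra h
    rw [not_nonempty_iff] at h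
    exact hgw1 (Equiv.ext fun x => (h.false x).elim)
  obtain ⟨α₀⟩ := hΩne
  haveI : Finite ↥N := inferInstance
  letI : Fintype ↥N := Fintype.ofFinite _
  set p := Nat.card (MulAction.orbit ↥N α₀) with hp_def
  have horb : ∀ α : Ω, Nat.card (MulAction.orbit ↥N α) = p :=
    fun α => stmt16_orbit_card_eq hNnormal htrans α α₀
  -- the embedding into Perm Ω
  have hι : Function.Injective (fun n : ↥N => ((n : ↥G) : Equiv.Perm Ω)) :=
    fun a b hab => Subtype.ext (Subtype.ext hab)
  have hone : ∀ n : ↥N, (∀ x : Ω, n • x = x) → n = 1 := by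
    intro n h
    apply hι
    ext x
    exact h x
  have hone' : ∀ n : ↥N, n ≠ 1 → ((n : ↥G) : Equiv.Perm Ω) ≠ 1 := by
    intro n hn h
    exact hn (hι (by simpa using h))
  -- every element satisfies n ^ p = 1
  have hstabn : ∀ x : Ω, (MulAction.stabilizer ↥N x).Normal := by
    intro x
    constructor
    intro a ha g
    have h1 : g * a * g⁻¹ = a := by rw [hNab g a, mul_inv_cancel_right]
    rwa [h1]
  have hexp : ∀ n : ↥N, n ^ p = 1 := by
    intro n
    apply hone
    intro x
    have hq : Nat.card (↥N ⧸ MulAction.stabilizer ↥N x) = p := by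
      rw [← horb x]
      exact (Nat.card_congr (MulAction.orbitEquivQuotientStabilizer ↥N x)).symm
    haveI := hstabn x
    have h1 : (QuotientGroup.mk' (MulAction.stabilizer ↥N x)) (n ^ p) = 1 := by
      rw [map_pow, ← hq]
      exact pow_card_eq_one'
    exact (QuotientGroup.eq_one_iff (n ^ p)).mp h1
  -- a nontrivial element of N
  obtain ⟨n₀, hn₀⟩ : ∃ n : ↥N, n ≠ 1 := by
    by_contra h
    push_neg at h
    refine hNbot (Subgroup.eq_bot_iff_forall N |>.mpr fun x hx => ?_)
    have := h ⟨x, hx⟩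
    simpa using congrArg (Subtype.val) this
  obtain ⟨x₁, hx₁⟩ : ∃ x : Ω, n₀ • x ≠ x := by
    by_contra h
    push_neg at h
    exact hn₀ (hone n₀ h)
  have hp2 : 2 ≤ p := by
    rw [← horb x₁]
    haveI : Nontrivial (MulAction.orbit ↥N x₁) :=
      ⟨⟨n₀ • x₁, MulAction.mem_orbit _ _⟩, ⟨x₁, MulAction.mem_orbit_self _⟩, by
        simp only [ne_eq, Subtype.mk.injEq]
        exact hx₁⟩
    exact Finite.one_lt_card_iff_nontrivial.mpr this
  -- every element of prime order has a fixed point (elusiveness)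
  have hfixpoint : ∀ n : ↥N, (orderOf n).Prime → ∃ x : Ω, n • x = x := by
    intro n hn
    by_contra h
    push_neg at h
    refine helusive ⟨((n : ↥G) : Equiv.Perm Ω), (n : ↥G).2, ?_, ?_⟩
    · have ho : orderOf ((n : ↥G) : Equiv.Perm Ω) = orderOf n :=
        orderOf_injective (G.subtype.comp N.subtype)
          (G.subtype_injective.comp N.subtype_injective) n
      rw [ho]
      exact hn
    · exact fun x hx => h x hx
  -- fixedCount as an ncard
  have hfc_eq : ∀ gp : Equiv.Perm Ω, fixedCount gp = Set.ncard {x : Ω | gp x = x} := by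
    intro gp
    rw [fixedCount, ← Nat.card_coe_set_eq]
    rfl
  -- p ≤ 3
  have hcardN1 : 1 < Nat.card ↥N := Finite.one_lt_card_iff_nontrivial.mpr ⟨n₀, 1, hn₀⟩
  have hp3 : p ≤ 3 := by
    have hqprime : (Nat.card ↥N).minFac.Prime := Nat.minFac_prime (by omega)
    haveI : Fact (Nat.card ↥N).minFac.Prime := ⟨hqprime⟩
    obtain ⟨n₁, hn₁⟩ : ∃ n : ↥N, orderOf n = (Nat.card ↥N).minFac := by
      apply exists_prime_orderOf_dvd_card
      rw [← Nat.card_eq_fintype_card]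
      exact Nat.minFac_dvd _
    have hn₁1 : n₁ ≠ 1 := by
      intro h
      rw [h, orderOf_one] at hn₁
      exact hqprime.one_lt.ne hn₁
    obtain ⟨x₂, hx₂⟩ := hfixpoint n₁ (by rw [hn₁]; exact hqprime)
    have h1 : p ≤ fixedCount ((n₁ : ↥G) : Equiv.Perm Ω) := by
      rw [hfc_eq, ← horb x₂, ← Nat.card_coe_set_eq]
      refine Set.ncard_le_ncard ?_ (Set.toFinite _)
      exact fun y hy => stmt16_fix_orbit hNab n₁ hx₂ hy
    have h2 := hbound _ (n₁ : ↥G).2 (hone' n₁ hn₁1)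
    omega
  have hp23 : p = 2 ∨ p = 3 := by omega
  have hpprime : p.Prime := by rcases hp23 with h | h <;> rw [h] <;> norm_num
  -- every nontrivial element fixes exactly `p` points, namely a single orbit
  have hfc : ∀ n : ↥N, n ≠ 1 → Set.ncard {x : Ω | n • x = x} = p := by
    intro n hn
    have hord : orderOf n = p :=
      (hpprime.eq_one_or_self_of_dvd _ (orderOf_dvd_of_pow_eq_one (hexp n))).resolve_left
        (fun h => hn (orderOf_eq_one_iff.mp h))
    obtain ⟨x, hx⟩ := hfixpoint n (by rw [hord]; exact hpprime)
    have hsub : (MulAction.orbit ↥N x : Set Ω) ⊆ {y : Ω | n • y = y} :=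
      fun y hy => stmt16_fix_orbit hNab n hx hy
    have hb3 : Set.ncard {x : Ω | n • x = x} ≤ 3 := by
      have h2 := hbound _ (n : ↥G).2 (hone' n hn)
      rw [hfc_eq] at h2
      exact h2
    have hsub2 : {y : Ω | n • y = y} ⊆ MulAction.orbit ↥N x := by
      intro β hβ
      by_contra hβo
      have hsubβ : (MulAction.orbit ↥N β : Set Ω) ⊆ {y : Ω | n • y = y} :=
        fun y hy => stmt16_fix_orbit hNab n hβ hy
      have hdisj : Disjoint (MulAction.orbit ↥N x : Set Ω) (MulAction.orbit ↥N β) := by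
        rw [Set.disjoint_left]
        intro a hax haβ
        obtain ⟨m, hm⟩ := hax
        obtain ⟨m', hm'⟩ := haβ
        have hm2 : m • x = a := hm
        have hm2' : m' • β = a := hm'
        refine hβo ⟨m'⁻¹ * m, ?_⟩
        show (m'⁻¹ * m) • x = β
        rw [mul_smul, hm2, ← hm2', inv_smul_smul]
      have hcard2 : p + p ≤ Set.ncard {y : Ω | n • y = y} := by
        have hu : (MulAction.orbit ↥N x : Set Ω) ∪ (MulAction.orbit ↥N β) ⊆ {y : Ω | n • y = y} :=
          Set.union_subset hsub hsubβ
        have hue := Set.ncard_union_eq hdisj (Set.toFinite _) (Set.toFinite _)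
        have hle := Set.ncard_le_ncard hu (Set.toFinite _)
        rw [hue] at hle
        rw [← Nat.card_coe_set_eq, ← Nat.card_coe_set_eq, horb, horb] at hle
        exact hle
      omega
    have heq : {y : Ω | n • y = y} = MulAction.orbit ↥N x := Set.Subset.antisymm hsub2 hsub
    rw [heq, ← Nat.card_coe_set_eq, horb]
  -- orbit-stabilizer
  have hNps : ∀ x : Ω, Nat.card ↥N = p * Nat.card (MulAction.stabilizer ↥N x) := by
    intro x
    rw [Subgroup.card_eq_card_quotient_mul_card_subgroup (MulAction.stabilizer ↥N x)]
    congr 1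
    rw [← horb x]
    exact (Nat.card_congr (MulAction.orbitEquivQuotientStabilizer ↥N x)).symm
  obtain ⟨s, hs_def⟩ : ∃ s, Nat.card (MulAction.stabilizer ↥N α₀) = s := ⟨_, rfl⟩
  have hstabcard : ∀ x : Ω, Nat.card (MulAction.stabilizer ↥N x) = s := by
    intro x
    have h := (hNps x).symm.trans (hNps α₀)
    rw [hs_def] at h
    exact Nat.eq_of_mul_eq_mul_left (by omega) h
  have hNcard : Nat.card ↥N = p * s := by rw [hNps α₀, hs_def]
  have hs0 : 0 < s := by
    rw [← hs_def]
    haveI : Nonempty ↥(MulAction.stabilizer ↥N α₀) := ⟨1⟩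
    exact Nat.card_pos
  -- the double count
  have hswap : ∑ x : Ω, (Finset.univ.filter fun n : ↥N => n • x = x).card
      = ∑ n : ↥N, (Finset.univ.filter fun x : Ω => n • x = x).card := by
    simp_rw [Finset.card_filter]
    exact Finset.sum_comm
  have hterm1 : ∀ x : Ω, (Finset.univ.filter fun n : ↥N => n • x = x).card = s := by
    intro x
    rw [← Fintype.card_subtype, ← Nat.card_eq_fintype_card, ← hstabcard x]
    exact Nat.card_congr (Equiv.subtypeEquivRight fun n => Iff.rfl)
  have hterm2 : ∀ n : ↥N, n ≠ 1 → (Finset.univ.filter fun x : Ω => n • x = x).card = p := by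
    intro n hn
    rw [← Fintype.card_subtype, ← Nat.card_eq_fintype_card, ← hfc n hn,
      ← Nat.card_coe_set_eq]
    exact Nat.card_congr (Equiv.subtypeEquivRight fun x => Iff.rfl)
  have hLHS : ∑ x : Ω, (Finset.univ.filter fun n : ↥N => n • x = x).card
      = Fintype.card Ω * s := by
    rw [Finset.sum_congr rfl fun x _ => hterm1 x, Finset.sum_const, smul_eq_mul,
      Finset.card_univ]
  have hRHS : ∑ n : ↥N, (Finset.univ.filter fun x : Ω => n • x = x).card + p
      = (p * s) * p + Fintype.card Ω := by
    rw [← Finset.sum_erase_add Finset.univ _ (Finset.mem_univ (1 : ↥N))]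
    have h1 : (Finset.univ.filter fun x : Ω => (1 : ↥N) • x = x).card = Fintype.card Ω := by
      simp
    rw [h1]
    rw [Finset.sum_congr rfl fun n hn => hterm2 n (Finset.ne_of_mem_erase hn),
      Finset.sum_const, smul_eq_mul, Finset.card_erase_of_mem (Finset.mem_univ _),
      Finset.card_univ]
    have hNfin : Fintype.card ↥N = p * s := by rw [← Nat.card_eq_fintype_card]; exact hNcard
    rw [hNfin, Nat.sub_one_mul]
    have hple : p ≤ p * s * p := by
      calc p ≤ p * (s * p) := Nat.le_mul_of_pos_right p (by positivity)
        _ = p * s * p := by ring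
    omega
  have hmain : Fintype.card Ω * s + p = (p * s) * p + Fintype.card Ω := by
    rw [← hRHS, ← hswap, hLHS]
  -- p divides |Ω|
  have hdvd : p ∣ Fintype.card Ω := by
    letI : Fintype (MulAction.orbitRel.Quotient ↥N Ω) := Fintype.ofFinite _
    letI : ∀ ω : MulAction.orbitRel.Quotient ↥N Ω, Fintype (MulAction.orbit ↥N ω.out) :=
      fun _ => Fintype.ofFinite _
    have h1 : Fintype.card Ω
        = ∑ ω : MulAction.orbitRel.Quotient ↥N Ω, Fintype.card (MulAction.orbit ↥N ω.out) := by
      rw [← Fintype.card_sigma]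
      exact Fintype.card_congr (MulAction.selfEquivSigmaOrbits ↥N Ω)
    rw [h1]
    refine Finset.dvd_sum fun ω _ => ?_
    rw [← Nat.card_eq_fintype_card, horb]
  obtain ⟨k, hk⟩ := hdvd
  have hppos : 0 < p := by omega
  haveI : Nonempty Ω := ⟨α₀⟩
  have hΩpos : 0 < Fintype.card Ω := Fintype.card_pos
  have hk1 : 1 ≤ k := by
    rcases Nat.eq_zero_or_pos k with h | h
    · rw [h, mul_zero] at hk; omega
    · exact h
  have hks : k * s + 1 = s * p + k := by
    have e2 : p * (k * s + 1) = p * (s * p + k) := by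
      calc p * (k * s + 1) = (p * k) * s + p := by ring
        _ = (p * s) * p + (p * k) := by rw [← hk]; exact hmain
        _ = p * (s * p + k) := by ring
    exact Nat.eq_of_mul_eq_mul_left hppos e2
  have hs1 : s ≠ 1 := by
    intro h
    rw [h] at hks
    simp only [mul_one, one_mul] at hks
    omega
  obtain ⟨t, ht⟩ : ∃ t, s = t + 1 := ⟨s - 1, by omega⟩
  have ht1 : 1 ≤ t := by omega
  have h5 : k * t + 1 = t * p + p := by
    have e2 : k * t + k + 1 = t * p + p + k := by
      calc k * t + k + 1 = k * (t + 1) + 1 := by ring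
        _ = (t + 1) * p + k := by rw [← ht]; exact hks
        _ = t * p + p + k := by ring
    omega
  have h6 : t ∣ p - 1 := by
    have h7 : p - 1 = k * t - t * p := by omega
    rw [h7]
    exact Nat.dvd_sub (dvd_mul_left t k) (dvd_mul_right t p)
  have hsp_le : s ≤ p := by
    have := Nat.le_of_dvd (by omega) h6
    omega
  -- p divides s
  have hstab_nt : Nontrivial ↥(MulAction.stabilizer ↥N α₀) := by
    refine Finite.one_lt_card_iff_nontrivial.mp ?_
    rw [hs_def]
    omega
  obtain ⟨y, hy1⟩ := exists_ne (1 : ↥(MulAction.stabilizer ↥N α₀))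
  have hyN : (↑y : ↥N) ≠ 1 := fun h => hy1 (Subtype.ext h)
  have hordy : orderOf (↑y : ↥N) = p :=
    (hpprime.eq_one_or_self_of_dvd _ (orderOf_dvd_of_pow_eq_one (hexp ↑y))).resolve_left
      (fun h => hyN (orderOf_eq_one_iff.mp h))
  have hps : p ∣ s := by
    rw [← hs_def, ← hordy]
    exact Subgroup.orderOf_dvd_natCard _ y.2
  have hsp : s = p := le_antisymm hsp_le (Nat.le_of_dvd hs0 hps)
  have hcardN2 : Nat.card ↥N = p ^ 2 := by rw [hNcard, hsp, sq]
  letI : CommGroup ↥N := { (inferInstance : Group ↥N) with mul_comm := hNab }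
  rcases hp23 with h | h
  · exact Or.inl (stmt16_classify 2 Nat.prime_two ↥N (fun n => h ▸ hexp n) (h ▸ hcardN2))
  · exact Or.inr (stmt16_classify 3 Nat.prime_three ↥N (fun n => h ▸ hexp n) (h ▸ hcardN2))
end
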